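/- arXiv:2109.08572 — 9 statements merged into one kernel-verified Lean document; each statement's English description precedes it below -/
import Mathlib

section
/- Let K be a set of k-subspaces in PG(N,q), where 0 ≤ k ≤ N−1. If no (N−k−1)-dimensional subspace of PG(N,q) meets every element of K, then the union of the elements of K is a strong k-blocking set, i.e., K is a higgledy-piggledy set of k-subspaces. -/
open Module

namespace HP

variable (F : Type*) [Field F] (V : Type*) [AddCommGroup V] [Module F V]

/-- The set of points of the projective space `PG(V)` lying in a linear subspace `W`.
A projective point lies in `W` iff its representing one-dimensional subspace is below `W`. -/
def ptsIn (W : Submodule F V) : Set (Projectivization F V) := {P | P.submodule ≤ W}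

/-- The linear span of a set of projective points. -/
noncomputable def spanPts (S : Set (Projectivization F V)) : Submodule F V :=
  ⨆ P ∈ S, P.submodule

/-- `S` is a strong `k`-blocking set of an ambient projective space of projective
dimension `N`: every `(N-k)`-dimensional projective subspace `W` (i.e. linear subspace of
rank `N-k+1`) is spanned by its intersection with `S`. -/
def StrongBlock (N k : ℕ) (S : Set (Projectivization F V)) : Prop :=
  ∀ W : Submodule F V, finrank F W = N - k + 1 →
    spanPts F V (S ∩ ptsIn F V W) = W

end HP

open HP

/-- Extend a submodule to one of any prescribed dimension. -/
lemma aux_extend {F V : Type*} [Field F] [AddCommGroup V] [Module F V]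
    [FiniteDimensional F V] (n : ℕ) :
    ∀ (U : Submodule F V) (d : ℕ), finrank F U + n = d → d ≤ finrank F V →
      ∃ W : Submodule F V, U ≤ W ∧ finrank F W = d := by
  induction n with
  | zero => exact fun U d h _ => ⟨U, le_rfl, by omega⟩
  | succ n ih =>
    intro U d h hd
    have hlt : finrank F U < finrank F V := by omega
    obtain ⟨m, hm⟩ := U.exists_of_finrank_lt hlt
    have hm0 : m ≠ 0 := by
      intro h0
      exact hm 1 one_ne_zero (by simp [h0])
    have hmU : m ∉ U := by
      intro hmem
      exact hm 1 one_ne_zero (by simpa using hmem)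
    have hinf : U ⊓ Submodule.span F {m} = ⊥ := by
      rw [eq_bot_iff]
      rintro x ⟨hxU, hxs⟩
      obtain ⟨r, rfl⟩ := Submodule.mem_span_singleton.mp hxs
      rcases eq_or_ne r 0 with rfl | hr
      · simp
      · exact absurd hxU (hm r hr)
    have hrank : finrank F ↥(U ⊔ Submodule.span F {m}) = finrank F U + 1 := by
      have := Submodule.finrank_sup_add_finrank_inf_eq U (Submodule.span F {m})
      rw [hinf, finrank_bot, finrank_span_singleton hm0] at this
      omega
    obtain ⟨W, hUW, hW⟩ := ih (U ⊔ Submodule.span F {m}) d (by omega) hd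
    exact ⟨W, le_trans le_sup_left hUW, hW⟩

/-- if no `(N-k-1)`-subspace meets every element of a set `K` of
`k`-subspaces of `PG(N,q)`, then the union of the point sets of the elements of `K`
is a strong `k`-blocking set, i.e. `K` is a higgledy-piggledy set of `k`-subspaces. -/
theorem stmt_1 (F : Type*) [Field F] [Fintype F] (N k : ℕ) (hk : k ≤ N - 1)
    (K : Set (Submodule F (Fin (N + 1) → F)))
    (hdim : ∀ κ ∈ K, finrank F κ = k + 1)
    (hno : ¬ ∃ W : Submodule F (Fin (N + 1) → F),
      finrank F W = (N - k - 1) + 1 ∧ ∀ κ ∈ K, κ ⊓ W ≠ ⊥) :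
    StrongBlock F (Fin (N + 1) → F) N k (⋃ κ ∈ K, ptsIn F (Fin (N + 1) → F) κ) := by
  set V := Fin (N + 1) → F
  have hamb : finrank F V = N + 1 := by
    simp [V, Module.finrank_fin_fun]
  intro W hW
  set S := ⋃ κ ∈ K, ptsIn F V κ with hS
  set U := spanPts F V (S ∩ ptsIn F V W) with hU
  have hUW : U ≤ W := by
    apply iSup₂_le
    rintro P ⟨_, hP⟩
    exact hP
  -- every κ ∈ K contributes a nonzero vector to U
  have hmeetU : ∀ κ ∈ K, κ ⊓ U ≠ ⊥ := by
    intro κ hκ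
    have hκW : κ ⊓ W ≠ ⊥ := by
      intro hbot
      have h1 := Submodule.finrank_sup_add_finrank_inf_eq κ W
      have h2 : finrank F ↥(κ ⊔ W) ≤ N + 1 := le_of_le_of_eq (Submodule.finrank_le _) hamb
      rw [hbot, finrank_bot, hdim κ hκ, hW] at h1
      omega
    obtain ⟨v, hv, hv0⟩ := (Submodule.ne_bot_iff _).mp hκW
    obtain ⟨hvκ, hvW⟩ := hv
    set P := Projectivization.mk F v hv0 with hP
    have hPsub : P.submodule = Submodule.span F {v} := Projectivization.submodule_mk v hv0
    have hPS : P ∈ S ∩ ptsIn F V W := by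
      constructor
      · exact Set.mem_iUnion₂.mpr ⟨κ, hκ, by
          simp only [ptsIn, Set.mem_setOf_eq, hPsub]
          exact (Submodule.span_singleton_le_iff_mem v κ).mpr hvκ⟩
      · simp only [ptsIn, Set.mem_setOf_eq, hPsub]
        exact (Submodule.span_singleton_le_iff_mem v W).mpr hvW
    have hPle : P.submodule ≤ U := le_iSup₂_of_le P hPS le_rfl
    have hvU : v ∈ U := hPle (by rw [hPsub]; exact Submodule.mem_span_singleton_self v)
    exact (Submodule.ne_bot_iff _).mpr ⟨v, ⟨hvκ, hvU⟩, hv0⟩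
  -- now show U = W
  refine le_antisymm hUW ?_
  by_contra hWU
  have hlt : U < W := lt_of_le_of_ne hUW (by
    intro h; exact hWU (h ▸ le_rfl))
  have hfr : finrank F U < N - k + 1 := hW ▸ Submodule.finrank_lt_finrank_of_lt hlt
  have hle : finrank F U ≤ (N - k - 1) + 1 := by omega
  obtain ⟨W'', hUW'', hW''⟩ := aux_extend ((N - k - 1) + 1 - finrank F U) U ((N - k - 1) + 1)
    (by omega) (by omega)
  exact hno ⟨W'', hW'', fun κ hκ hbot => hmeetU κ hκ (by
    rw [eq_bot_iff] at hbot ⊢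
    exact le_trans (inf_le_inf_left κ hUW'') hbot)⟩
end

section
/- Let B be a strong k-blocking set of PG(N,q), Σ a hyperplane, and P a point lying neither in B nor in Σ. Then the projection B' = { ⟨P,S⟩ ∩ Σ : S ∈ B } is a strong k-blocking set of Σ ≅ PG(N−1,q). -/
open Module

open HP

section Aux

variable {K : Type*} [Field K] {V : Type*} [AddCommGroup V] [Module K V]
  [FiniteDimensional K V]

lemma aux_inf_bot {p W : Submodule K V} (hp : finrank K p = 1) (h : ¬ p ≤ W) :
    p ⊓ W = ⊥ := by
  by_contra hne
  have h0 : finrank K (p ⊓ W : Submodule K V) ≠ 0 := fun h0 =>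
    hne (Submodule.finrank_eq_zero.mp h0)
  have h1 : finrank K (p ⊓ W : Submodule K V) ≤ 1 := by
    rw [← hp]; exact Submodule.finrank_mono inf_le_left
  have heq : p ⊓ W = p :=
    Submodule.eq_of_le_of_finrank_le inf_le_left (by omega)
  exact h (heq ▸ inf_le_right)

end Aux


set_option maxHeartbeats 1000000 in
/-- projecting a strong `k`-blocking set `B` of `PG(N,q)` from a point
`P ∉ B ∪ Sg` onto a hyperplane `Sg` yields a strong `k`-blocking set of `Sg ≅ PG(N-1,q)`. -/
theorem stmt_3 (F : Type*) [Field F] [Fintype F] (N k : ℕ) (hk : k ≤ N - 2)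
    (B : Set (Projectivization F (Fin (N + 1) → F)))
    (hB : StrongBlock F (Fin (N + 1) → F) N k B)
    (Sg : Submodule F (Fin (N + 1) → F)) (hSg : finrank F Sg = N)
    (P : Projectivization F (Fin (N + 1) → F))
    (hPB : P ∉ B) (hPSg : ¬ P.submodule ≤ Sg)
    (B' : Set (Projectivization F (Fin (N + 1) → F)))
    (hB' : B' = {Q | ∃ S ∈ B, Q.submodule = (P.submodule ⊔ S.submodule) ⊓ Sg}) :
    ∀ W : Submodule F (Fin (N + 1) → F), W ≤ Sg → finrank F W = (N - 1) - k + 1 →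
      spanPts F (Fin (N + 1) → F) (B' ∩ ptsIn F (Fin (N + 1) → F) W) = W := by
  intro W hWSg hWrank
  have hVrank : finrank F (Fin (N + 1) → F) = N + 1 := by simp
  have htop : finrank F (⊤ : Submodule F (Fin (N + 1) → F)) = N + 1 := by
    rw [finrank_top]; exact hVrank
  have hWN : finrank F W ≤ N := le_trans (Submodule.finrank_mono hWSg) hSg.le
  have hN1 : 1 ≤ N := by omega
  have hP1 : finrank F P.submodule = 1 := P.finrank_submodule
  have hPSgbot : P.submodule ⊓ Sg = ⊥ := aux_inf_bot hP1 hPSg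
  have hPSgtop : P.submodule ⊔ Sg = ⊤ := by
    apply Submodule.eq_top_of_finrank_eq
    have h2 := Submodule.finrank_sup_add_finrank_inf_eq P.submodule Sg
    rw [hPSgbot, finrank_bot, hP1, hSg] at h2
    have hle : finrank F (P.submodule ⊔ Sg : Submodule F (Fin (N + 1) → F)) ≤ N + 1 :=
      le_trans (Submodule.finrank_mono le_top) htop.le
    rw [hVrank]
    omega
  set U := P.submodule ⊔ W with hU
  have hPWbot : P.submodule ⊓ W = ⊥ :=
    aux_inf_bot hP1 (fun h => hPSg (h.trans hWSg))
  have hUrank : finrank F U = N - k + 1 := by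
    have h2 := Submodule.finrank_sup_add_finrank_inf_eq P.submodule W
    rw [hPWbot, finrank_bot, hP1, hWrank, ← hU] at h2
    omega
  have hUspan := hB U hUrank
  have hUSg : U ⊓ Sg = W := by
    have hWle : W ≤ U ⊓ Sg := le_inf le_sup_right hWSg
    have h2 := Submodule.finrank_sup_add_finrank_inf_eq U Sg
    have hUSgtop : U ⊔ Sg = ⊤ := by
      rw [eq_top_iff, ← hPSgtop]
      exact sup_le_sup_right le_sup_left _
    rw [hUSgtop, htop, hUrank, hSg] at h2
    exact (Submodule.eq_of_le_of_finrank_le hWle (by omega)).symm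
  set T := spanPts F (Fin (N + 1) → F) (B' ∩ ptsIn F (Fin (N + 1) → F) W) with hT
  have hTW : T ≤ W := by
    rw [hT, spanPts]
    exact iSup₂_le fun Q hQ => hQ.2
  have hkey : ∀ S ∈ B ∩ ptsIn F (Fin (N + 1) → F) U,
      S.submodule ≤ P.submodule ⊔ T := by
    rintro S ⟨hSB, hSU⟩
    have hS1 : finrank F S.submodule = 1 := S.finrank_submodule
    have hSP : P.submodule ≠ S.submodule := by
      intro h
      exact hPB ((Projectivization.submodule_injective h) ▸ hSB)
    have hPSbot : P.submodule ⊓ S.submodule = ⊥ := by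
      refine aux_inf_bot hP1 (fun h => hSP ?_)
      exact Submodule.eq_of_le_of_finrank_le h (by rw [hP1, hS1])
    have hPS2 : finrank F (P.submodule ⊔ S.submodule : Submodule F (Fin (N + 1) → F)) = 2 := by
      have h2 := Submodule.finrank_sup_add_finrank_inf_eq P.submodule S.submodule
      rw [hPSbot, finrank_bot, hP1, hS1] at h2
      omega
    have hQ1 : finrank F ((P.submodule ⊔ S.submodule) ⊓ Sg : Submodule F (Fin (N + 1) → F)) = 1 := by
      have h2 := Submodule.finrank_sup_add_finrank_inf_eq (P.submodule ⊔ S.submodule) Sg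
      have htp : P.submodule ⊔ S.submodule ⊔ Sg = ⊤ := by
        rw [eq_top_iff, ← hPSgtop, sup_assoc]
        exact sup_le le_sup_left (le_sup_of_le_right le_sup_right)
      rw [htp, htop, hPS2, hSg] at h2
      omega
    set Q := Projectivization.mk'' ((P.submodule ⊔ S.submodule) ⊓ Sg) hQ1 with hQdef
    have hQsub : Q.submodule = (P.submodule ⊔ S.submodule) ⊓ Sg :=
      Projectivization.submodule_mk'' _ _
    have hQB' : Q ∈ B' := by
      rw [hB']; exact ⟨S, hSB, hQsub⟩
    have hQW : Q ∈ ptsIn F (Fin (N + 1) → F) W := by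
      rw [ptsIn, Set.mem_setOf_eq, hQsub, ← hUSg]
      exact inf_le_inf_right _ (sup_le le_sup_left hSU)
    have hQT : Q.submodule ≤ T := by
      rw [hT, spanPts]
      exact le_iSup₂_of_le Q ⟨hQB', hQW⟩ le_rfl
    have hmod : P.submodule ⊔ ((P.submodule ⊔ S.submodule) ⊓ Sg)
        = P.submodule ⊔ S.submodule := by
      rw [sup_comm P.submodule ((P.submodule ⊔ S.submodule) ⊓ Sg),
        inf_sup_assoc_of_le _ (le_sup_left : P.submodule ≤ P.submodule ⊔ S.submodule),
        sup_comm Sg P.submodule, hPSgtop, inf_top_eq]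
    calc S.submodule ≤ P.submodule ⊔ S.submodule := le_sup_right
      _ = P.submodule ⊔ ((P.submodule ⊔ S.submodule) ⊓ Sg) := hmod.symm
      _ ≤ P.submodule ⊔ T := sup_le_sup_left (hQsub ▸ hQT) _
  have hUle : U ≤ P.submodule ⊔ T := by
    rw [← hUspan, spanPts]
    exact iSup₂_le hkey
  have hWT : W ≤ T := by
    have h1 : W ≤ (P.submodule ⊔ T) ⊓ Sg :=
      le_inf (le_trans le_sup_right hUle) hWSg
    rw [sup_comm P.submodule T] at h1
    rwa [sup_inf_assoc_of_le _ (le_trans hTW hWSg : T ≤ Sg),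
      hPSgbot, sup_bot_eq] at h1
  exact le_antisymm hTW hWT
end

section
/- Let K be a higgledy-piggledy set of k-subspaces of PG(N,q), Σ a hyperplane, and P a point not in Σ and not contained in any element of K. Then K' = { ⟨P,κ⟩ ∩ Σ : κ ∈ K } is a higgledy-piggledy set of k-subspaces of Σ ≅ PG(N−1,q) of size at most |K|. -/
open Module

open HP

section Aux

variable {F : Type*} [Field F] {V : Type*} [AddCommGroup V] [Module F V]

lemma pt_inf_eq_bot [FiniteDimensional F V] {U : Submodule F V}
    (P : Projectivization F V) (h : ¬ P.submodule ≤ U) : P.submodule ⊓ U = ⊥ := by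
  have hlt : P.submodule ⊓ U < P.submodule :=
    lt_of_le_of_ne inf_le_left (fun he => h (he ▸ inf_le_right))
  have h2 := Submodule.finrank_lt_finrank_of_lt hlt
  rw [P.finrank_submodule] at h2
  have : finrank F (P.submodule ⊓ U : Submodule F V) = 0 := by omega
  exact Submodule.finrank_eq_zero.mp this

lemma le_spanPts {S : Set (Projectivization F V)} {Q : Projectivization F V} (hQ : Q ∈ S) :
    Q.submodule ≤ spanPts F V S :=
  le_iSup₂ (f := fun (P : Projectivization F V) (_ : P ∈ S) => P.submodule) Q hQ

end Aux

/-- projecting a higgledy-piggledy set `K` of `k`-subspaces of `PG(N,q)`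
from a point `P` (outside the hyperplane `Sg` and outside every element of `K`) onto `Sg`
yields a higgledy-piggledy set of `k`-subspaces of `Sg ≅ PG(N-1,q)` of size at most `|K|`. -/
theorem stmt_4 (F : Type*) [Field F] [Fintype F] (N k : ℕ) (hk : k ≤ N - 2)
    (K : Set (Submodule F (Fin (N + 1) → F)))
    (hdim : ∀ κ ∈ K, finrank F κ = k + 1)
    (hK : StrongBlock F (Fin (N + 1) → F) N k (⋃ κ ∈ K, ptsIn F (Fin (N + 1) → F) κ))
    (Sg : Submodule F (Fin (N + 1) → F)) (hSg : finrank F Sg = N)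
    (P : Projectivization F (Fin (N + 1) → F))
    (hPSg : ¬ P.submodule ≤ Sg) (hPK : ∀ κ ∈ K, ¬ P.submodule ≤ κ)
    (K' : Set (Submodule F (Fin (N + 1) → F)))
    (hK' : K' = {κ' | ∃ κ ∈ K, κ' = (P.submodule ⊔ κ) ⊓ Sg}) :
    (∀ κ' ∈ K', κ' ≤ Sg ∧ finrank F κ' = k + 1) ∧
    (∀ W : Submodule F (Fin (N + 1) → F), W ≤ Sg → finrank F W = (N - 1) - k + 1 →
      spanPts F (Fin (N + 1) → F)
        ((⋃ κ' ∈ K', ptsIn F (Fin (N + 1) → F) κ') ∩ ptsIn F (Fin (N + 1) → F) W) = W) ∧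
    K'.ncard ≤ K.ncard := by
  have hV : finrank F (Fin (N + 1) → F) = N + 1 := Module.finrank_fin_fun F
  have hPrk : finrank F P.submodule = 1 := P.finrank_submodule
  have hPSgbot : P.submodule ⊓ Sg = ⊥ := pt_inf_eq_bot P hPSg
  have hPSgtop : P.submodule ⊔ Sg = ⊤ := by
    apply Submodule.eq_top_of_finrank_eq
    have h := Submodule.finrank_sup_add_finrank_inf_eq P.submodule Sg
    rw [hPSgbot, finrank_bot, hPrk, hSg] at h
    rw [hV]; omega
  -- Part 1
  have hdim' : ∀ κ ∈ K, (P.submodule ⊔ κ) ⊓ Sg ≤ Sg ∧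
      finrank F ((P.submodule ⊔ κ) ⊓ Sg : Submodule F (Fin (N + 1) → F)) = k + 1 := by
    intro κ hκ
    refine ⟨inf_le_right, ?_⟩
    have h1 : P.submodule ⊓ κ = ⊥ := pt_inf_eq_bot P (hPK κ hκ)
    have h2 := Submodule.finrank_sup_add_finrank_inf_eq P.submodule κ
    rw [h1, finrank_bot, hPrk, hdim κ hκ] at h2
    have htop : (P.submodule ⊔ κ) ⊔ Sg = ⊤ :=
      eq_top_iff.mpr (hPSgtop ▸ sup_le_sup_right le_sup_left Sg)
    have h3 := Submodule.finrank_sup_add_finrank_inf_eq (P.submodule ⊔ κ) Sg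
    rw [htop, finrank_top, hV, hSg] at h3
    omega
  -- Part 2
  have hpart2 : ∀ W : Submodule F (Fin (N + 1) → F), W ≤ Sg → finrank F W = (N - 1) - k + 1 →
      spanPts F (Fin (N + 1) → F)
        ((⋃ κ' ∈ K', ptsIn F (Fin (N + 1) → F) κ') ∩ ptsIn F (Fin (N + 1) → F) W) = W := by
    intro W hWSg hWrk
    have hN : 1 ≤ N := by
      by_contra h
      have := Submodule.finrank_mono hWSg
      rw [hWrk, hSg] at this
      omega
    have hPWbot : P.submodule ⊓ W = ⊥ := pt_inf_eq_bot P (fun h => hPSg (h.trans hWSg))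
    set Wp := P.submodule ⊔ W with hWp
    have hWprk : finrank F Wp = N - k + 1 := by
      have h := Submodule.finrank_sup_add_finrank_inf_eq P.submodule W
      rw [← hWp, hPWbot, finrank_bot, hPrk, hWrk] at h
      omega
    have hspan := hK Wp hWprk
    have hc : IsCompl Sg P.submodule :=
      ⟨disjoint_iff.mpr (by rw [inf_comm]; exact hPSgbot),
       codisjoint_iff.mpr (by rw [sup_comm]; exact hPSgtop)⟩
    set π : (Fin (N + 1) → F) →ₗ[F] (Fin (N + 1) → F) :=
      Sg.subtype ∘ₗ Sg.projectionOnto P.submodule hc with hπ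
    have hπSg : ∀ x ∈ Sg, π x = x := by
      intro x hx
      show (Sg.projectionOnto P.submodule hc x : Fin (N + 1) → F) = x
      rw [show x = ((⟨x, hx⟩ : Sg) : Fin (N + 1) → F) from rfl,
        Submodule.projectionOnto_apply_left hc]
    have hπP : ∀ x ∈ P.submodule, π x = 0 := by
      intro x hx
      show (Sg.projectionOnto P.submodule hc x : Fin (N + 1) → F) = 0
      rw [Submodule.projectionOnto_apply_of_mem_right hc hx, Submodule.coe_zero]
    have hπmem : ∀ x, π x ∈ Sg := fun x => Submodule.coe_mem _
    have hπsub : ∀ x, x - π x ∈ P.submodule := by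
      intro x
      have h := Submodule.projection_add_projection_eq_self hc x
      have heq : x - π x = (P.submodule.projectionOnto Sg hc.symm x : Fin (N + 1) → F) :=
        sub_eq_iff_eq_add'.mpr h.symm
      exact heq ▸ Submodule.coe_mem _
    have hmapW : Submodule.map π W = W := by
      apply le_antisymm
      · rintro x ⟨y, hy, rfl⟩
        rw [hπSg y (hWSg hy)]; exact hy
      · intro x hx
        exact ⟨x, hx, hπSg x (hWSg hx)⟩
    have hmapWp : Submodule.map π Wp = W := by
      have hbP : Submodule.map π P.submodule = ⊥ := by
        rw [eq_bot_iff]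
        rintro x ⟨y, hy, rfl⟩
        simp [hπP y hy]
      rw [hWp, Submodule.map_sup, hmapW, hbP, bot_sup_eq]
    apply le_antisymm
    · exact iSup₂_le fun Q hQ => hQ.2
    · have key : Submodule.map π (spanPts F (Fin (N + 1) → F)
          ((⋃ κ ∈ K, ptsIn F (Fin (N + 1) → F) κ) ∩ ptsIn F (Fin (N + 1) → F) Wp)) ≤
          spanPts F (Fin (N + 1) → F)
            ((⋃ κ' ∈ K', ptsIn F (Fin (N + 1) → F) κ') ∩ ptsIn F (Fin (N + 1) → F) W) := by
        rw [spanPts, Submodule.map_iSup]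
        apply iSup_le
        intro Q
        rw [Submodule.map_iSup]
        apply iSup_le
        rintro ⟨hQS, hQW⟩
        obtain ⟨κ, hκK, hQκ⟩ := Set.mem_iUnion₂.mp hQS
        have hrepmem : Q.rep ∈ Q.submodule := by
          rw [Q.submodule_eq]; exact Submodule.mem_span_singleton_self _
        rw [Q.submodule_eq, Submodule.map_span, Set.image_singleton]
        set v := π Q.rep with hv
        by_cases hv0 : v = 0
        · rw [hv0]; simp
        · have hQrepκ : Q.rep ∈ κ := hQκ hrepmem
          have hQrepWp : Q.rep ∈ Wp := hQW hrepmem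
          have hvκ' : v ∈ (P.submodule ⊔ κ) ⊓ Sg := by
            refine ⟨?_, hπmem _⟩
            rw [show v = Q.rep - (Q.rep - v) from (sub_sub_cancel _ _).symm]
            exact sub_mem (Submodule.mem_sup_right hQrepκ)
              (Submodule.mem_sup_left (hπsub Q.rep))
          have hvW : v ∈ W := hmapWp ▸ Submodule.mem_map_of_mem hQrepWp
          have hR : (Projectivization.mk F v hv0) ∈
              (⋃ κ' ∈ K', ptsIn F (Fin (N + 1) → F) κ') ∩ ptsIn F (Fin (N + 1) → F) W := by
            constructor
            · apply Set.mem_iUnion₂.mpr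
              refine ⟨(P.submodule ⊔ κ) ⊓ Sg, ?_, ?_⟩
              · rw [hK']; exact ⟨κ, hκK, rfl⟩
              · show (Projectivization.mk F v hv0).submodule ≤ _
                rw [Projectivization.submodule_mk]
                exact (Submodule.span_singleton_le_iff_mem _ _).mpr hvκ'
            · show (Projectivization.mk F v hv0).submodule ≤ W
              rw [Projectivization.submodule_mk]
              exact (Submodule.span_singleton_le_iff_mem _ _).mpr hvW
          have := le_spanPts hR
          rw [Projectivization.submodule_mk] at this
          exact this
      calc W = Submodule.map π Wp := hmapWp.symm
        _ = Submodule.map π (spanPts F (Fin (N + 1) → F)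
            ((⋃ κ ∈ K, ptsIn F (Fin (N + 1) → F) κ) ∩ ptsIn F (Fin (N + 1) → F) Wp)) := by
            rw [hspan]
        _ ≤ _ := key
  refine ⟨?_, hpart2, ?_⟩
  · intro κ' hκ'
    rw [hK'] at hκ'
    obtain ⟨κ, hκ, rfl⟩ := hκ'
    exact hdim' κ hκ
  · have himg : K' = (fun κ => (P.submodule ⊔ κ) ⊓ Sg) '' K := by
      rw [hK']; ext x
      simp only [Set.mem_setOf_eq, Set.mem_image]
      constructor
      · rintro ⟨κ, hκ, rfl⟩; exact ⟨κ, hκ, rfl⟩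
      · rintro ⟨κ, hκ, rfl⟩; exact ⟨κ, hκ, rfl⟩
    rw [himg]
    exact Set.ncard_image_le (Set.toFinite K)
end

section
/- Suppose L is a higgledy-piggledy set of lines of PG(N,q) with |L| = N + ⌊N/2⌋ ≤ q and N odd. Then the lines of L are pairwise disjoint. -/
open Module

open HP

section Helpers

variable {F : Type*} [Field F] {V : Type*} [AddCommGroup V] [Module F V]
  [FiniteDimensional F V]

/-- The intersection of two subspaces whose dimensions sum to more than the ambient
dimension is nonzero. -/
lemma inf_ne_bot_of_finrank {A B : Submodule F V}
    (h : finrank F V < finrank F A + finrank F B) : A ⊓ B ≠ ⊥ := by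
  intro hbot
  have key := Submodule.finrank_sup_add_finrank_inf_eq A B
  rw [hbot, finrank_bot, add_zero] at key
  have : finrank F ↥(A ⊔ B) ≤ finrank F V := Submodule.finrank_le _
  omega

lemma finrank_sup_span_singleton {S : Submodule F V} {u : V} (hu : u ∉ S) :
    finrank F ↥(S ⊔ F ∙ u) = finrank F S + 1 := by
  have hu0 : u ≠ 0 := fun h => hu (h ▸ S.zero_mem)
  have hinf : S ⊓ (F ∙ u) = ⊥ := by
    rw [eq_bot_iff]
    rintro x ⟨hxS, hxu⟩
    obtain ⟨c, rfl⟩ := Submodule.mem_span_singleton.mp hxu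
    rcases eq_or_ne c 0 with rfl | hc
    · simp
    · have : c⁻¹ • (c • u) ∈ S := S.smul_mem c⁻¹ hxS
      rw [smul_smul, inv_mul_cancel₀ hc, one_smul] at this
      exact absurd this hu
  have key := Submodule.finrank_sup_add_finrank_inf_eq S (F ∙ u)
  rw [hinf, finrank_bot, add_zero, finrank_span_singleton hu0] at key
  omega

lemma exists_not_mem_of_ne_top {W : Submodule F V} (h : W ≠ ⊤) : ∃ u, u ∉ W := by
  by_contra hc
  push_neg at hc
  exact h (Submodule.eq_top_iff'.mpr hc)

lemma exists_le_finrank_eq (k : ℕ) (hk : k ≤ finrank F V) :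
    ∀ S : Submodule F V, finrank F S ≤ k → ∃ W : Submodule F V, S ≤ W ∧ finrank F W = k := by
  induction k with
  | zero =>
    intro S hS
    have : S = ⊥ := by
      rw [← Submodule.finrank_eq_zero (R := F) (S := S)]; omega
    exact ⟨⊥, this.le, finrank_bot F V⟩
  | succ k ih =>
    intro S hS
    rcases eq_or_lt_of_le hS with heq | hlt
    · exact ⟨S, le_rfl, heq⟩
    · obtain ⟨W, hSW, hW⟩ := ih (by omega) S (by omega)
      have hWne : W ≠ ⊤ := by
        intro h
        rw [h, finrank_top] at hW
        omega
      obtain ⟨u, hu⟩ := exists_not_mem_of_ne_top hWne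
      exact ⟨W ⊔ F ∙ u, hSW.trans le_sup_left, by rw [finrank_sup_span_singleton hu, hW]⟩

lemma finrank_finset_sup_le {ι : Type*} [DecidableEq ι] (s : Finset ι)
    (f : ι → Submodule F V) (c : ℕ) (hc : ∀ i ∈ s, finrank F (f i) ≤ c) :
    finrank F ↥(s.sup f) ≤ s.card * c := by
  induction s using Finset.induction with
  | empty => simp
  | @insert a s ha ih =>
    rw [Finset.sup_insert, Finset.card_insert_of_notMem ha]
    calc finrank F ↥(f a ⊔ s.sup f) ≤ finrank F (f a) + finrank F ↥(s.sup f) :=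
          Submodule.finrank_add_le_finrank_add_finrank _ _
      _ ≤ c + s.card * c := by
          have := ih (fun i hi => hc i (Finset.mem_insert_of_mem hi))
          have := hc a (Finset.mem_insert_self a s)
          omega
      _ = (s.card + 1) * c := by ring

lemma finrank_span_singleton_le (v : V) : finrank F ↥(F ∙ v) ≤ 1 := by
  rcases eq_or_ne v 0 with rfl | hv
  · rw [Submodule.span_singleton_eq_bot.mpr rfl, finrank_bot]; omega
  · rw [finrank_span_singleton hv]

end Helpers

set_option maxHeartbeats 2000000 in
/-- if `L` is a higgledy-piggledy set of lines of `PG(N,q)`, `N` odd, with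
`|L| = N + ⌊N/2⌋ ≤ q`, then the lines of `L` are pairwise disjoint. -/
theorem stmt_7 (F : Type*) [Field F] [Fintype F] (N : ℕ) (hN : 1 ≤ N) (hodd : Odd N)
    (L : Set (Submodule F (Fin (N + 1) → F)))
    (hdim : ∀ ℓ ∈ L, finrank F ℓ = 2)
    (hL : StrongBlock F (Fin (N + 1) → F) N 1 (⋃ ℓ ∈ L, ptsIn F (Fin (N + 1) → F) ℓ))
    (hcard : L.ncard = N + N / 2) (hq : N + N / 2 ≤ Fintype.card F) :
    ∀ ℓ₁ ∈ L, ∀ ℓ₂ ∈ L, ℓ₁ ≠ ℓ₂ → ℓ₁ ⊓ ℓ₂ = ⊥ := by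
  classical
  have hVr : finrank F (Fin (N + 1) → F) = N + 1 := Module.finrank_fin_fun F
  intro ℓ₁ h1 ℓ₂ h2 hne
  by_contra hPbot
  -- L is finite
  have hfinL : L.Finite := by
    by_contra h
    have := Set.Infinite.ncard h
    omega
  -- N ≥ 3
  have hN3 : 3 ≤ N := by
    by_contra h
    have hN1 : N = 1 := by obtain ⟨t, ht⟩ := hodd; omega
    have hc1 : L.ncard = 1 := by omega
    obtain ⟨a, ha⟩ := Set.ncard_eq_one.mp hc1
    rw [ha] at h1 h2
    exact hne (h1.trans h2.symm)
  -- the common point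
  obtain ⟨p, hpmem, hp0⟩ := Submodule.exists_mem_ne_zero_of_ne_bot hPbot
  set P : Submodule F (Fin (N + 1) → F) := F ∙ p with hPdef
  -- finsets
  set lfin := hfinL.toFinset with hlfin
  have hlcard : lfin.card = N + N / 2 := by
    rw [hlfin, ← Set.ncard_eq_toFinset_card _ hfinL, hcard]
  set ML := (lfin.erase ℓ₁).erase ℓ₂ with hMLdef
  have hMLcard : ML.card = N + N / 2 - 2 := by
    have hm2 : ℓ₂ ∈ lfin.erase ℓ₁ :=
      Finset.mem_erase.mpr ⟨hne.symm, hfinL.mem_toFinset.mpr h2⟩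
    rw [hMLdef, Finset.card_erase_of_mem hm2,
      Finset.card_erase_of_mem (hfinL.mem_toFinset.mpr h1), hlcard]
    omega
  have hMLsub : ∀ ℓ ∈ ML, ℓ ∈ L := fun ℓ h =>
    hfinL.mem_toFinset.mp (Finset.mem_of_mem_erase (Finset.mem_of_mem_erase h))
  obtain ⟨K, hKsub, hKcard⟩ := Finset.exists_subset_card_eq (s := ML) (n := N / 2) (by omega)
  -- first hyperplane H₁
  set A := P ⊔ K.sup id with hAdef
  have hArank : finrank F A ≤ N := by
    have h1' : finrank F P ≤ 1 := finrank_span_singleton_le p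
    have h2' : finrank F ↥(K.sup id) ≤ (N / 2) * 2 := by
      rw [← hKcard]
      exact finrank_finset_sup_le K id 2 (fun i hi => (hdim i (hMLsub i (hKsub hi))).le)
    have h3' : finrank F A ≤ finrank F P + finrank F ↥(K.sup id) :=
      Submodule.finrank_add_le_finrank_add_finrank _ _
    obtain ⟨t, ht⟩ := hodd
    omega
  obtain ⟨H₁, hAH₁, hH₁rank⟩ := exists_le_finrank_eq N (by omega) A hArank
  -- remaining lines and their points in H₁
  set R := ML \ K with hRdef
  have hRcard : R.card = N - 2 := by
    rw [hRdef, Finset.card_sdiff_of_subset hKsub]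
    omega
  have hxex : ∀ ℓ : Submodule F (Fin (N + 1) → F),
      ∃ v, ℓ ∈ R → (v ∈ ℓ ⊓ H₁ ∧ v ≠ 0) := by
    intro ℓ
    by_cases hℓ : ℓ ∈ R
    · have h2' : finrank F ℓ = 2 := hdim _ (hMLsub _ (Finset.mem_sdiff.mp hℓ).1)
      have hne' : ℓ ⊓ H₁ ≠ ⊥ := inf_ne_bot_of_finrank (by rw [hVr, h2', hH₁rank]; omega)
      obtain ⟨v, hv, hv0⟩ := Submodule.exists_mem_ne_zero_of_ne_bot hne'
      exact ⟨v, fun _ => ⟨hv, hv0⟩⟩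
    · exact ⟨0, fun h => absurd h hℓ⟩
  choose x hx using hxex
  -- second hyperplane H₂
  set S0 := P ⊔ R.sup (fun ℓ => F ∙ x ℓ) with hS0def
  have hS0rank : finrank F S0 ≤ N - 1 := by
    have h1' : finrank F P ≤ 1 := finrank_span_singleton_le p
    have h2' : finrank F ↥(R.sup (fun ℓ => F ∙ x ℓ)) ≤ (N - 2) * 1 := by
      rw [← hRcard]
      exact finrank_finset_sup_le R _ 1 (fun i _ => finrank_span_singleton_le (x i))
    have h3' : finrank F S0 ≤ finrank F P + finrank F ↥(R.sup (fun ℓ => F ∙ x ℓ)) :=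
      Submodule.finrank_add_le_finrank_add_finrank _ _
    omega
  have hH₁ne : H₁ ≠ ⊤ := by
    intro h
    rw [h, finrank_top, hVr] at hH₁rank
    omega
  obtain ⟨z, hz⟩ := exists_not_mem_of_ne_top hH₁ne
  obtain ⟨H₂, hSH₂, hH₂rank⟩ := exists_le_finrank_eq N (by omega) (S0 ⊔ F ∙ z) (by
    have h1' : finrank F ↥(F ∙ z) ≤ 1 := finrank_span_singleton_le z
    have h3' : finrank F ↥(S0 ⊔ F ∙ z) ≤ finrank F S0 + finrank F ↥(F ∙ z) :=
      Submodule.finrank_add_le_finrank_add_finrank _ _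
    omega)
  have hzH₂ : z ∈ H₂ := hSH₂ (Submodule.mem_sup_right (Submodule.mem_span_singleton_self z))
  have hS0H₂ : S0 ≤ H₂ := le_sup_left.trans hSH₂
  have hH₁₂ : H₁ ≠ H₂ := fun h => hz (h ▸ hzH₂)
  -- the transversal T
  have hTrank : finrank F ↥(H₁ ⊓ H₂) = N - 1 := by
    have key := Submodule.finrank_sup_add_finrank_inf_eq H₁ H₂
    have hlt : H₁ < H₁ ⊔ H₂ := lt_of_le_of_ne le_sup_left
      (fun h => hz (h ▸ Submodule.mem_sup_right hzH₂))
    have hge : finrank F H₁ < finrank F ↥(H₁ ⊔ H₂) := Submodule.finrank_lt_finrank_of_lt hlt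
    have hle := Submodule.finrank_le (H₁ ⊔ H₂)
    omega
  set T := H₁ ⊓ H₂ with hTdef
  have hPA : P ≤ A := le_sup_left
  have hPS0 : P ≤ S0 := le_sup_left
  have hpT : p ∈ T := ⟨hAH₁ (hPA (Submodule.mem_span_singleton_self p)),
    hS0H₂ (hPS0 (Submodule.mem_span_singleton_self p))⟩
  -- T meets every line of L
  have htrans : ∀ ℓ ∈ L, ℓ ⊓ T ≠ ⊥ := by
    intro ℓ hℓ
    by_cases e1 : ℓ = ℓ₁
    · exact Submodule.ne_bot_iff _ |>.mpr ⟨p, ⟨e1 ▸ hpmem.1, hpT⟩, hp0⟩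
    by_cases e2 : ℓ = ℓ₂
    · exact Submodule.ne_bot_iff _ |>.mpr ⟨p, ⟨e2 ▸ hpmem.2, hpT⟩, hp0⟩
    have hML : ℓ ∈ ML := Finset.mem_erase.mpr ⟨e2,
      Finset.mem_erase.mpr ⟨e1, hfinL.mem_toFinset.mpr hℓ⟩⟩
    by_cases hK : ℓ ∈ K
    · have hlH₁ : ℓ ≤ H₁ := by
        have : (id ℓ : Submodule F (Fin (N + 1) → F)) ≤ K.sup id := Finset.le_sup hK
        exact le_trans this (le_trans le_sup_right hAH₁)
      have h2' : finrank F ℓ = 2 := hdim ℓ hℓ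
      have hne' : ℓ ⊓ H₂ ≠ ⊥ := inf_ne_bot_of_finrank (by rw [hVr, h2', hH₂rank]; omega)
      have heq' : ℓ ⊓ T = ℓ ⊓ H₂ := by
        rw [hTdef, ← inf_assoc, inf_eq_left.mpr hlH₁]
      rw [heq']
      exact hne'
    · have hR : ℓ ∈ R := Finset.mem_sdiff.mpr ⟨hML, hK⟩
      obtain ⟨hxin, hx0⟩ := hx ℓ hR
      refine Submodule.ne_bot_iff _ |>.mpr ⟨x ℓ, ⟨hxin.1, ⟨hxin.2, ?_⟩⟩, hx0⟩
      have h' : (F ∙ x ℓ) ≤ R.sup (fun ℓ => F ∙ x ℓ) :=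
        Finset.le_sup (f := fun ℓ => F ∙ x ℓ) hR
      exact hS0H₂ (Submodule.mem_sup_right (h' (Submodule.mem_span_singleton_self _)))
  -- the family of q+1 hyperplanes through T
  have hTne : T ≠ ⊤ := by
    intro h
    rw [h, finrank_top] at hTrank
    omega
  obtain ⟨u, hu⟩ := exists_not_mem_of_ne_top hTne
  have hT1rank : finrank F ↥(T ⊔ F ∙ u) = N := by
    rw [finrank_sup_span_singleton hu, hTrank]; omega
  have hT1ne : (T ⊔ F ∙ u) ≠ ⊤ := by
    intro h
    rw [h, finrank_top] at hT1rank
    omega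
  obtain ⟨v, hv⟩ := exists_not_mem_of_ne_top hT1ne
  have hvT : v ∉ T := fun h => hv (Submodule.mem_sup_left h)
  have huT1 : u ∈ T ⊔ F ∙ u := Submodule.mem_sup_right (Submodule.mem_span_singleton_self u)
  have hgen : ∀ t : F, u + t • v ∉ T := by
    intro t ht
    rcases eq_or_ne t 0 with rfl | ht0
    · rw [zero_smul, add_zero] at ht; exact hu ht
    · have h1' : (t • v) ∈ T ⊔ F ∙ u := by
        have hm : u + t • v ∈ T ⊔ F ∙ u := Submodule.mem_sup_left ht
        have := sub_mem hm huT1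
        simpa using this
      have h2' : v ∈ T ⊔ F ∙ u := by
        have := (T ⊔ F ∙ u).smul_mem t⁻¹ h1'
        rwa [smul_smul, inv_mul_cancel₀ ht0, one_smul] at this
      exact hv h2'
  set Fam : Option F → Submodule F (Fin (N + 1) → F) :=
    fun o => Option.elim o (T ⊔ F ∙ v) (fun t => T ⊔ F ∙ (u + t • v)) with hFamdef
  have hTFam : ∀ o, T ≤ Fam o := by intro o; cases o <;> exact le_sup_left
  have hFamrank : ∀ o, finrank F ↥(Fam o) = N := by
    intro o
    cases o with
    | none =>
      show finrank F ↥(T ⊔ F ∙ v) = N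
      rw [finrank_sup_span_singleton hvT, hTrank]; omega
    | some t =>
      show finrank F ↥(T ⊔ F ∙ (u + t • v)) = N
      rw [finrank_sup_span_singleton (hgen t), hTrank]; omega
  have hFamuv : ∀ o, ¬(u ∈ Fam o ∧ v ∈ Fam o) := by
    rintro o ⟨huW, hvW⟩
    have h1' : (T ⊔ F ∙ u) ≤ Fam o := sup_le (hTFam o) (by
      rwa [Submodule.span_singleton_le_iff_mem])
    have h2' : ((T ⊔ F ∙ u) ⊔ F ∙ v) ≤ Fam o := sup_le h1' (by
      rwa [Submodule.span_singleton_le_iff_mem])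
    have h3' : finrank F ↥((T ⊔ F ∙ u) ⊔ F ∙ v) = N + 1 := by
      rw [finrank_sup_span_singleton hv, hT1rank]
    have h4' := Submodule.finrank_mono h2'
    rw [h3', hFamrank o] at h4'
    omega
  have hvFamN : v ∈ Fam none := Submodule.mem_sup_right (Submodule.mem_span_singleton_self v)
  have hgFamS : ∀ t : F, u + t • v ∈ Fam (some t) :=
    fun t => Submodule.mem_sup_right (Submodule.mem_span_singleton_self _)
  have hFaminj : Function.Injective Fam := by
    have keyns : ∀ t : F, Fam none ≠ Fam (some t) := by
      intro t hEq
      have hvW : v ∈ Fam (some t) := hEq ▸ hvFamN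
      have huW : u ∈ Fam (some t) := by
        have := sub_mem (hgFamS t) (Submodule.smul_mem _ t hvW)
        simpa using this
      exact hFamuv (some t) ⟨huW, hvW⟩
    intro o1 o2 heq
    match o1, o2 with
    | none, none => rfl
    | none, some t => exact absurd heq (keyns t)
    | some t, none => exact absurd heq.symm (keyns t)
    | some t, some s =>
      by_cases hts : t = s
      · rw [hts]
      · exfalso
        have h1' : u + s • v ∈ Fam (some t) := heq ▸ hgFamS s
        have h2' : (t - s) • v ∈ Fam (some t) := by
          have hm := sub_mem (hgFamS t) h1'
          have e : u + t • v - (u + s • v) = (t - s) • v := by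
            rw [sub_smul]; abel
          rwa [e] at hm
        have hvW : v ∈ Fam (some t) := by
          have := Submodule.smul_mem _ (t - s)⁻¹ h2'
          rwa [smul_smul, inv_mul_cancel₀ (sub_ne_zero.mpr hts), one_smul] at this
        have huW : u ∈ Fam (some t) := by
          have := sub_mem (hgFamS t) (Submodule.smul_mem _ t hvW)
          simpa using this
        exact hFamuv (some t) ⟨huW, hvW⟩
  -- there is a good hyperplane through T
  obtain ⟨o, hgood⟩ : ∃ o, ∀ ℓ ∈ L, ℓ ≤ Fam o → ℓ ≤ T := by
    by_contra hbad
    push_neg at hbad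
    have hsub : Set.range Fam ⊆ (fun ℓ => T ⊔ ℓ) '' L := by
      rintro W ⟨o, rfl⟩
      obtain ⟨ℓ, hℓL, hle', hnle⟩ := hbad o
      refine ⟨ℓ, hℓL, ?_⟩
      have hne' := htrans ℓ hℓL
      have hinf_lt : ℓ ⊓ T < ℓ := lt_of_le_of_ne inf_le_left
        (fun h => hnle (h ▸ inf_le_right))
      have hfr_lt : finrank F ↥(ℓ ⊓ T) < 2 := by
        have := Submodule.finrank_lt_finrank_of_lt hinf_lt
        rwa [hdim ℓ hℓL] at this
      have hfr_pos : finrank F ↥(ℓ ⊓ T) ≠ 0 := by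
        rw [Ne, Submodule.finrank_eq_zero]; exact hne'
      have key := Submodule.finrank_sup_add_finrank_inf_eq ℓ T
      have hsupr : finrank F ↥(ℓ ⊔ T) = N := by
        rw [hdim ℓ hℓL, hTrank] at key
        omega
      have hle2 : T ⊔ ℓ ≤ Fam o := sup_le (hTFam o) hle'
      have heq3 : T ⊔ ℓ = Fam o := Submodule.eq_of_le_of_finrank_le hle2 (by
        rw [hFamrank o, sup_comm T ℓ, hsupr])
      exact heq3
    have hc1 : (Set.range Fam).ncard = Fintype.card F + 1 := by
      rw [← Set.image_univ, Set.ncard_image_of_injective _ hFaminj, Set.ncard_univ,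
        Nat.card_eq_fintype_card, Fintype.card_option]
    have hc2 : ((fun ℓ => T ⊔ ℓ) '' L).ncard ≤ N + N / 2 := by
      rw [← hcard]; exact Set.ncard_image_le hfinL
    have hc3 := Set.ncard_le_ncard hsub (hfinL.image _)
    omega
  -- contradiction with the strong blocking property
  have hWrank : finrank F ↥(Fam o) = N - 1 + 1 := by rw [hFamrank o]; omega
  have hspan := hL (Fam o) hWrank
  have hfinal : spanPts F (Fin (N + 1) → F)
      ((⋃ ℓ ∈ L, ptsIn F (Fin (N + 1) → F) ℓ) ∩ ptsIn F (Fin (N + 1) → F) (Fam o)) ≤ T := by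
    refine iSup₂_le ?_
    rintro Q ⟨hQS, hQW⟩
    obtain ⟨ℓ, hℓL, hQℓ⟩ := Set.mem_iUnion₂.mp hQS
    have hQℓ' : Q.submodule ≤ ℓ := hQℓ
    have hQW' : Q.submodule ≤ Fam o := hQW
    by_cases hc : ℓ ≤ Fam o
    · exact le_trans hQℓ' (hgood ℓ hℓL hc)
    · have hTle : ℓ ⊓ T ≤ ℓ ⊓ Fam o := inf_le_inf_left ℓ (hTFam o)
      have hlt2 : ℓ ⊓ Fam o < ℓ := lt_of_le_of_ne inf_le_left
        (fun h => hc (h ▸ inf_le_right))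
      have hfr1 : finrank F ↥(ℓ ⊓ Fam o) < 2 := by
        have := Submodule.finrank_lt_finrank_of_lt hlt2
        rwa [hdim ℓ hℓL] at this
      have hfr2 : finrank F ↥(ℓ ⊓ T) ≠ 0 := by
        rw [Ne, Submodule.finrank_eq_zero]; exact htrans ℓ hℓL
      have heq2 : ℓ ⊓ T = ℓ ⊓ Fam o := Submodule.eq_of_le_of_finrank_le hTle (by omega)
      exact le_trans (le_inf hQℓ' hQW') (heq2 ▸ (inf_le_right : ℓ ⊓ T ≤ T))
  rw [hspan] at hfinal
  have hmono := Submodule.finrank_mono hfinal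
  rw [hFamrank o, hTrank] at hmono
  omega
end

section
/- Suppose L is a higgledy-piggledy set of lines of PG(N,q) with |L| = N + N/2 ≤ q, where N ≥ 4 is even. Then there is at most one pair of intersecting lines in L; that is, one cannot find two distinct (unordered) pairs of lines of L each of which intersects. -/
open Module

open HP

set_option linter.unusedSectionVars false
set_option linter.unusedVariables false

open Module Submodule

section Helpers

variable {F V : Type*} [Field F] [AddCommGroup V] [Module F V] [FiniteDimensional F V]

lemma hp_one_le_finrank {p : Submodule F V} (h : p ≠ ⊥) : 1 ≤ finrank F p :=
  Submodule.one_le_finrank_iff.mpr h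

lemma hp_finrank_sup_le (p q : Submodule F V) :
    finrank F ↥(p ⊔ q) ≤ finrank F p + finrank F q := by
  have := Submodule.finrank_sup_add_finrank_inf_eq p q
  omega

lemma hp_inf_ne_bot (p q : Submodule F V)
    (h : finrank F V < finrank F p + finrank F q) : p ⊓ q ≠ ⊥ := by
  intro hb
  have h1 := Submodule.finrank_sup_add_finrank_inf_eq p q
  rw [hb, finrank_bot] at h1
  have h2 : finrank F ↥(p ⊔ q) ≤ finrank F V := Submodule.finrank_le _
  omega

lemma hp_rank_sup_span {W : Submodule F V} {x : V} (hx : x ∉ W) :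
    finrank F ↥(W ⊔ F ∙ x) = finrank F W + 1 := by
  have hx0 : x ≠ 0 := fun h => hx (h ▸ W.zero_mem)
  have hinf : W ⊓ (F ∙ x) = ⊥ := by
    rw [eq_bot_iff]
    rintro v ⟨hvW, hv⟩
    obtain ⟨t, rfl⟩ := Submodule.mem_span_singleton.mp hv
    rcases eq_or_ne t 0 with rfl | ht
    · simp
    · exact absurd (by simpa [ht] using W.smul_mem t⁻¹ hvW) hx
  have := Submodule.finrank_sup_add_finrank_inf_eq W (F ∙ x)
  rw [hinf, finrank_bot, finrank_span_singleton hx0] at this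
  omega

lemma hp_exists_not_mem {W : Submodule F V} (h : W ≠ ⊤) : ∃ x, x ∉ W := by
  by_contra hc
  push_neg at hc
  exact h (Submodule.eq_top_iff'.mpr hc)

lemma hp_exists_superset_aux (d : ℕ) :
    ∀ (W : Submodule F V) (k : ℕ), finrank F W + d = k → k ≤ finrank F V →
    ∃ H, W ≤ H ∧ finrank F H = k := by
  induction d with
  | zero => exact fun W k h _ => ⟨W, le_rfl, by omega⟩
  | succ d ih =>
    intro W k h hk
    have hW : W ≠ ⊤ := by
      intro hT
      rw [hT, finrank_top] at h
      omega
    obtain ⟨x, hx⟩ := hp_exists_not_mem hW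
    obtain ⟨H, hH1, hH2⟩ := ih (W ⊔ F ∙ x) k (by rw [hp_rank_sup_span hx]; omega) hk
    exact ⟨H, le_sup_left.trans hH1, hH2⟩

lemma hp_exists_superset (W : Submodule F V) (k : ℕ) (h1 : finrank F W ≤ k)
    (h2 : k ≤ finrank F V) : ∃ H, W ≤ H ∧ finrank F H = k :=
  hp_exists_superset_aux (k - finrank F W) W k (by omega) h2

lemma hp_rank_biSup_le {ι : Type*} (s : Set ι) (hs : s.Finite) (f : ι → Submodule F V) (c : ℕ)
    (h : ∀ i ∈ s, finrank F (f i) ≤ c) :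
    finrank F ↥(⨆ i ∈ s, f i) ≤ c * s.ncard := by
  revert h
  refine Set.Finite.induction_on s hs ?_ ?_
  · simp
  · intro a s ha hs ih h
    rw [iSup_insert]
    have h1 := hp_finrank_sup_le (f a) (⨆ i ∈ s, f i)
    have h2 := ih (fun i hi => h i (Set.mem_insert_of_mem a hi))
    have h3 := h a (Set.mem_insert a s)
    rw [Set.ncard_insert_of_notMem ha hs, Nat.mul_add, Nat.mul_one]
    omega

end Helpers


section Helpers
variable {F V : Type*} [Field F] [AddCommGroup V] [Module F V] [FiniteDimensional F V]

lemma hp_good [Fintype F] (Λ : Submodule F V) (hΛ : finrank F Λ + 2 = finrank F V)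
    (B : Set (Submodule F V)) (hBfin : B.Finite) (hB : B.ncard ≤ Fintype.card F) :
    ∃ H, Λ ≤ H ∧ finrank F H + 1 = finrank F V ∧ H ∉ B := by
  have hΛtop : Λ ≠ ⊤ := by
    intro h
    rw [h, finrank_top] at hΛ
    omega
  obtain ⟨x, hx⟩ := hp_exists_not_mem hΛtop
  have hrx : finrank F ↥(Λ ⊔ F ∙ x) = finrank F Λ + 1 := hp_rank_sup_span hx
  have htop2 : (Λ ⊔ F ∙ x) ≠ ⊤ := by
    intro h
    rw [h, finrank_top] at hrx
    omega
  obtain ⟨y, hy⟩ := hp_exists_not_mem htop2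
  have key : ∀ s t : F, s • x + t • y ∈ Λ → s = 0 ∧ t = 0 := by
    intro s t h
    rcases eq_or_ne t 0 with rfl | ht
    · rw [zero_smul, add_zero] at h
      rcases eq_or_ne s 0 with rfl | hs
      · exact ⟨rfl, rfl⟩
      · exact absurd (by simpa [hs] using Λ.smul_mem s⁻¹ h) hx
    · exfalso
      apply hy
      have h1 : s • x + t • y ∈ Λ ⊔ F ∙ x := Submodule.mem_sup_left h
      have h2 : s • x ∈ Λ ⊔ F ∙ x :=
        Submodule.mem_sup_right (Submodule.smul_mem _ s (Submodule.mem_span_singleton_self x))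
      have h3 : t • y ∈ Λ ⊔ F ∙ x := by
        have := Submodule.sub_mem _ h1 h2
        simpa using this
      simpa [ht] using Submodule.smul_mem _ t⁻¹ h3
  -- candidates
  set cand : F → Submodule F V := fun c => Λ ⊔ F ∙ (x + c • y) with hcand
  set cInf : Submodule F V := Λ ⊔ F ∙ y with hcInf
  have hxc : ∀ c : F, x + c • y ∉ Λ := by
    intro c h
    have := key 1 c (by simpa using h)
    simpa using this.1
  have hyΛ : y ∉ Λ := by
    intro h
    have := key 0 1 (by simpa using h)
    simpa using this.2
  have hrank : ∀ c : F, finrank F ↥(cand c) + 1 = finrank F V := by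
    intro c
    have : finrank F ↥(Λ ⊔ F ∙ (x + c • y)) = finrank F Λ + 1 := hp_rank_sup_span (hxc c)
    show finrank F ↥(Λ ⊔ F ∙ (x + c • y)) + 1 = finrank F V
    omega
  have hrankInf : finrank F ↥cInf + 1 = finrank F V := by
    have : finrank F ↥(Λ ⊔ F ∙ y) = finrank F Λ + 1 := hp_rank_sup_span hyΛ
    show finrank F ↥(Λ ⊔ F ∙ y) + 1 = finrank F V
    omega
  have hinj : Function.Injective cand := by
    intro c c' h
    have hmem : x + c • y ∈ Λ ⊔ F ∙ (x + c' • y) := by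
      have : x + c • y ∈ cand c' := by
        rw [← h]
        exact Submodule.mem_sup_right (Submodule.mem_span_singleton_self _)
      simpa only [hcand] using this
    rw [Submodule.mem_sup] at hmem
    obtain ⟨a, ha, b, hb, hab⟩ := hmem
    obtain ⟨t, rfl⟩ := Submodule.mem_span_singleton.mp hb
    have heq : a = (1 - t) • x + (c - t * c') • y := by
      have h' : a = x + c • y - t • (x + c' • y) := eq_sub_of_add_eq hab
      rw [h']
      module
    have hkey := key _ _ (heq ▸ ha)
    have ht : t = 1 := by
      have := hkey.1
      linear_combination -this
    have := hkey.2
    rw [ht] at this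
    linear_combination this
  have hnr : cInf ∉ Set.range cand := by
    rintro ⟨c, hc⟩
    have hmem : y ∈ Λ ⊔ F ∙ (x + c • y) := by
      have : y ∈ cand c := by
        rw [hc]
        exact Submodule.mem_sup_right (Submodule.mem_span_singleton_self _)
      simpa only [hcand] using this
    rw [Submodule.mem_sup] at hmem
    obtain ⟨a, ha, b, hb, hab⟩ := hmem
    obtain ⟨t, rfl⟩ := Submodule.mem_span_singleton.mp hb
    have heq : a = (-t) • x + (1 - t * c) • y := by
      have h' : a = y - t • (x + c • y) := eq_sub_of_add_eq hab
      rw [h']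
      module
    have hkey := key _ _ (heq ▸ ha)
    have ht : t = 0 := by
      have := hkey.1
      linear_combination -this
    have := hkey.2
    rw [ht] at this
    simp at this
  -- counting
  have hrfin : (Set.range cand).Finite := Set.finite_range cand
  have hTfin : (insert cInf (Set.range cand)).Finite := hrfin.insert _
  have hTcard : (insert cInf (Set.range cand)).ncard = Fintype.card F + 1 := by
    rw [Set.ncard_insert_of_notMem hnr hrfin]
    congr 1
    rw [← Set.image_univ, Set.ncard_image_of_injective _ hinj, Set.ncard_univ]
    exact Nat.card_eq_fintype_card
  have hnotsub : ¬ (insert cInf (Set.range cand)) ⊆ B := by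
    intro hsub
    have := Set.ncard_le_ncard hsub hBfin
    omega
  rw [Set.not_subset] at hnotsub
  obtain ⟨H, hHT, hHB⟩ := hnotsub
  rcases hHT with rfl | ⟨c, rfl⟩
  · exact ⟨cInf, le_sup_left, hrankInf, hHB⟩
  · exact ⟨cand c, le_sup_left, hrank c, hHB⟩


end Helpers


section Construct
variable {F V : Type*} [Field F] [AddCommGroup V] [Module F V] [FiniteDimensional F V]

lemma hp_construct {N : ℕ} (hV : finrank F V = N + 1) (hNpos : 1 ≤ N)
    (L C D : Set (Submodule F V)) (hLfin : L.Finite) (hCD : C ∪ D ⊆ L)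
    (hdim : ∀ ℓ ∈ L, finrank F ℓ = 2)
    (S₀ p : Submodule F V) (hpS : p ≤ S₀) (hCS : ∀ ℓ ∈ C, ℓ ≤ S₀)
    (hpD : ∀ ℓ ∈ D, p ≠ ⊥ ∧ p ≤ ℓ)
    (k : ℕ) (hk : k ≤ (L \ (C ∪ D)).ncard)
    (hrank : finrank F S₀ + 2 * k ≤ N)
    (hUb : finrank F p + ((L \ (C ∪ D)).ncard - k) + 1 ≤ N) :
    ∃ H U : Submodule F V, finrank F H = N ∧ U ≤ H ∧ finrank F U + 1 ≤ N ∧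
      ∀ ℓ ∈ L, ℓ ≤ H ∨ ℓ ⊓ U ≠ ⊥ := by
  classical
  -- choose E
  have hdfin : (L \ (C ∪ D)).Finite := hLfin.diff
  obtain ⟨E, hE1, hE2, hE3⟩ : ∃ E, E ⊆ L \ (C ∪ D) ∧ E.Finite ∧ E.ncard = k := by
    obtain ⟨E, hE, hEcard⟩ := Set.exists_subset_encard_eq
      (show (k : ℕ∞) ≤ (L \ (C ∪ D)).encard by
        rw [hdfin.encard_eq_coe_toFinset_card]
        rw [Set.ncard_eq_toFinset_card _ hdfin] at hk
        exact_mod_cast hk)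
    have hEfin : E.Finite := Set.finite_of_encard_eq_coe hEcard
    refine ⟨E, hE, hEfin, ?_⟩
    rw [Set.ncard_def, hEcard]
    simp
  -- S and H
  have hSrank : finrank F ↥(S₀ ⊔ ⨆ ℓ ∈ E, ℓ) ≤ N := by
    have h1 := hp_finrank_sup_le S₀ (⨆ ℓ ∈ E, ℓ)
    have h2 : finrank F ↥(⨆ ℓ ∈ E, ℓ) ≤ 2 * E.ncard := by
      apply hp_rank_biSup_le E hE2 _ 2
      intro ℓ hℓ
      rw [hdim ℓ ((hE1 hℓ).1)]
    rw [hE3] at h2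
    omega
  obtain ⟨H, hSH, hHrank⟩ := hp_exists_superset _ N hSrank (by omega)
  -- U
  set R : Set (Submodule F V) := L \ (C ∪ D ∪ E) with hR
  have hRfin : R.Finite := hLfin.diff
  have hRcard : R.ncard ≤ (L \ (C ∪ D)).ncard - k := by
    have : R = (L \ (C ∪ D)) \ E := by
      rw [hR, Set.diff_diff]
    rw [this, Set.ncard_diff hE1 hE2, hE3]
  set R' : Set (Submodule F V) := {ℓ ∈ R | ¬ ℓ ≤ H} with hR'
  have hR'sub : R' ⊆ R := Set.sep_subset _ _
  have hR'fin : R'.Finite := hRfin.subset hR'sub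
  set U : Submodule F V := p ⊔ ⨆ ℓ ∈ R', (ℓ ⊓ H) with hU
  have hUH : U ≤ H := by
    rw [hU]
    apply sup_le (hpS.trans (le_sup_left.trans hSH))
    exact iSup₂_le fun ℓ _ => inf_le_right
  have hgrank : ∀ ℓ ∈ R', finrank F ↥(ℓ ⊓ H) ≤ 1 := by
    intro ℓ hℓ
    have hnle : ¬ ℓ ≤ H := hℓ.2
    have hlt : ℓ ⊓ H < ℓ := lt_of_le_of_ne inf_le_left (fun h => hnle (h ▸ inf_le_right))
    have := Submodule.finrank_lt_finrank_of_lt hlt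
    rw [hdim ℓ (hR'sub hℓ).1] at this
    omega
  have hUrank : finrank F U + 1 ≤ N := by
    have h1 := hp_finrank_sup_le p (⨆ ℓ ∈ R', (ℓ ⊓ H))
    have h2 : finrank F ↥(⨆ ℓ ∈ R', (ℓ ⊓ H)) ≤ 1 * R'.ncard :=
      hp_rank_biSup_le R' hR'fin (fun ℓ => ℓ ⊓ H) 1 hgrank
    rw [one_mul] at h2
    have h3 : R'.ncard ≤ R.ncard := Set.ncard_le_ncard hR'sub hRfin
    have : finrank F U ≤ finrank F p + R'.ncard := by
      rw [hU]; omega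
    omega
  refine ⟨H, U, hHrank, hUH, hUrank, ?_⟩
  intro ℓ hℓ
  by_cases hmem : ℓ ∈ C ∪ D ∪ E
  · rcases hmem with (hC | hD) | hE
    · exact Or.inl ((hCS ℓ hC).trans (le_sup_left.trans hSH))
    · right
      obtain ⟨hp0, hpℓ⟩ := hpD ℓ hD
      have : p ≤ ℓ ⊓ U := le_inf hpℓ (hU ▸ le_sup_left)
      intro hb
      exact hp0 (le_bot_iff.mp (hb ▸ this))
    · left
      calc ℓ ≤ ⨆ ℓ ∈ E, ℓ := le_biSup (fun x => x) hE
        _ ≤ H := le_sup_right.trans hSH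
  · have hℓR : ℓ ∈ R := ⟨hℓ, hmem⟩
    by_cases hle : ℓ ≤ H
    · exact Or.inl hle
    · right
      have hℓR' : ℓ ∈ R' := ⟨hℓR, hle⟩
      have h1 : ℓ ⊓ H ≤ U := by
        rw [hU]
        exact (le_biSup (fun x => x ⊓ H) hℓR').trans le_sup_right
      have h2 : ℓ ⊓ H ≤ ℓ ⊓ U := le_inf inf_le_left h1
      have h3 : ℓ ⊓ H ≠ ⊥ := by
        apply hp_inf_ne_bot
        rw [hdim ℓ hℓ, hHrank, hV]
        omega
      intro hb
      exact h3 (le_bot_iff.mp (hb ▸ h2))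

end Construct

section Contra
variable {F V : Type*} [Field F] [AddCommGroup V] [Module F V] [FiniteDimensional F V]

lemma hp_contra [Fintype F] {N : ℕ} (hN : 4 ≤ N) (hV : finrank F V = N + 1)
    (L : Set (Submodule F V)) (hLfin : L.Finite)
    (hdim : ∀ ℓ ∈ L, finrank F ℓ = 2)
    (hL : StrongBlock F V N 1 (⋃ ℓ ∈ L, ptsIn F V ℓ))
    (hq : L.ncard ≤ Fintype.card F)
    (H U : Submodule F V) (hH : finrank F H = N) (hUH : U ≤ H) (hU : finrank F U + 1 ≤ N)
    (hcov : ∀ ℓ ∈ L, ℓ ≤ H ∨ ℓ ⊓ U ≠ ⊥) : False := by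
  -- pick w outside H, H' ⊇ U ⊔ span w of rank N
  have hHtop : H ≠ ⊤ := by
    intro h; rw [h, finrank_top, hV] at hH; omega
  obtain ⟨w, hw⟩ := hp_exists_not_mem hHtop
  have hUsw : finrank F ↥(U ⊔ F ∙ w) ≤ N := by
    have h1 := hp_finrank_sup_le U (F ∙ w)
    have h2 : finrank F ↥(F ∙ w) ≤ 1 := by
      rw [finrank_span_singleton (fun h => hw (by rw [h]; exact H.zero_mem))]
    omega
  obtain ⟨H', hUH', hH'rank⟩ := hp_exists_superset _ N hUsw (by omega)
  have hwH' : w ∈ H' := hUH' (Submodule.mem_sup_right (Submodule.mem_span_singleton_self w))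
  have hUleH' : U ≤ H' := le_sup_left.trans hUH'
  -- Λ = H ⊓ H' has rank N - 1
  have hsup_top : finrank F ↥(H ⊔ H') = N + 1 := by
    have h1 : H ⊔ (F ∙ w) ≤ H ⊔ H' :=
      sup_le le_sup_left (((Submodule.span_singleton_le_iff_mem w H').mpr hwH').trans le_sup_right)
    have h2 : finrank F ↥(H ⊔ F ∙ w) = N + 1 := by rw [hp_rank_sup_span hw, hH]
    have h3 := Submodule.finrank_mono h1
    have h4 : finrank F ↥(H ⊔ H') ≤ finrank F V := Submodule.finrank_le _
    omega
  have hΛrank : finrank F ↥(H ⊓ H') + 1 = N := by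
    have := Submodule.finrank_sup_add_finrank_inf_eq H H'
    rw [hsup_top, hH, hH'rank] at this
    omega
  set Λ : Submodule F V := H ⊓ H' with hΛ
  -- every line meets Λ
  have hmeet : ∀ ℓ ∈ L, ℓ ⊓ Λ ≠ ⊥ := by
    intro ℓ hℓ
    rcases hcov ℓ hℓ with hle | hne
    · have : ℓ ⊓ Λ = ℓ ⊓ H' := by
        rw [hΛ]
        apply le_antisymm (inf_le_inf_left ℓ inf_le_right)
        exact le_inf inf_le_left (le_inf (inf_le_left.trans hle) inf_le_right)
      rw [this]
      apply hp_inf_ne_bot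
      rw [hdim ℓ hℓ, hH'rank, hV]
      omega
    · have h1 : ℓ ⊓ U ≤ ℓ ⊓ Λ := inf_le_inf_left ℓ (le_inf hUH hUleH')
      intro hb
      exact hne (le_bot_iff.mp (hb ▸ h1))
  -- good hyperplane H₁
  obtain ⟨H₁, hΛH₁, hH₁rank, hH₁B⟩ := hp_good Λ (by rw [hV]; omega)
    ((fun ℓ => Λ ⊔ ℓ) '' L) (hLfin.image _)
    (le_trans (Set.ncard_image_le hLfin) hq)
  rw [hV] at hH₁rank
  -- goodness : lines inside H₁ are inside Λ
  have hgood : ∀ ℓ ∈ L, ℓ ≤ H₁ → ℓ ≤ Λ := by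
    intro ℓ hℓ hle
    by_contra hnle
    have hinfrank : finrank F ↥(ℓ ⊓ Λ) = 1 := by
      have h1 : 1 ≤ finrank F ↥(ℓ ⊓ Λ) := hp_one_le_finrank (hmeet ℓ hℓ)
      have h2 : ℓ ⊓ Λ < ℓ := lt_of_le_of_ne inf_le_left (fun h => hnle (h ▸ inf_le_right))
      have h3 := Submodule.finrank_lt_finrank_of_lt h2
      rw [hdim ℓ hℓ] at h3
      omega
    have hsuprank : finrank F ↥(Λ ⊔ ℓ) = N := by
      have := Submodule.finrank_sup_add_finrank_inf_eq Λ ℓ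
      rw [inf_comm Λ ℓ, hinfrank, hdim ℓ hℓ] at this
      omega
    have hsuple : Λ ⊔ ℓ ≤ H₁ := sup_le hΛH₁ hle
    have : Λ ⊔ ℓ = H₁ := Submodule.eq_of_le_of_finrank_le hsuple (by omega)
    exact hH₁B ⟨ℓ, hℓ, this⟩
  -- strong blocking gives contradiction
  have hblock := hL H₁ (by omega)
  have hspan : spanPts F V ((⋃ ℓ ∈ L, ptsIn F V ℓ) ∩ ptsIn F V H₁) ≤ Λ := by
    apply iSup₂_le
    rintro P ⟨hP1, hP2⟩
    rw [Set.mem_iUnion₂] at hP1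
    obtain ⟨ℓ, hℓ, hPℓ⟩ := hP1
    have hPsub : P.submodule ≤ ℓ := hPℓ
    have hPH₁ : P.submodule ≤ H₁ := hP2
    by_cases hlΛ : ℓ ≤ Λ
    · exact hPsub.trans hlΛ
    · have hnH₁ : ¬ ℓ ≤ H₁ := fun h => hlΛ (hgood ℓ hℓ h)
      have h2 : ℓ ⊓ H₁ < ℓ := lt_of_le_of_ne inf_le_left (fun h => hnH₁ (h ▸ inf_le_right))
      have h3 := Submodule.finrank_lt_finrank_of_lt h2
      rw [hdim ℓ hℓ] at h3
      have h4 : ℓ ⊓ Λ ≤ ℓ ⊓ H₁ := inf_le_inf_left ℓ hΛH₁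
      have h5 : 1 ≤ finrank F ↥(ℓ ⊓ Λ) := hp_one_le_finrank (hmeet ℓ hℓ)
      have h6 : ℓ ⊓ Λ = ℓ ⊓ H₁ := Submodule.eq_of_le_of_finrank_le h4 (by omega)
      have : P.submodule ≤ ℓ ⊓ H₁ := le_inf hPsub hPH₁
      rw [← h6] at this
      exact this.trans inf_le_right
  rw [hblock] at hspan
  have := Submodule.finrank_mono hspan
  omega

end Contra


section Cases
variable {F V : Type*} [Field F] [AddCommGroup V] [Module F V] [FiniteDimensional F V]

lemma hp_line_inf_rank_le_one {c d : Submodule F V} (hc : finrank F c = 2)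
    (hd : finrank F d = 2) (hcd : c ≠ d) : finrank F ↥(c ⊓ d) ≤ 1 := by
  have hlt : c ⊓ d < c := by
    apply lt_of_le_of_ne inf_le_left
    intro h
    have hle : c ≤ d := h ▸ inf_le_right
    exact hcd (Submodule.eq_of_le_of_finrank_le hle (by omega))
  have := Submodule.finrank_lt_finrank_of_lt hlt
  omega

lemma hp_case4 [Fintype F] {N : ℕ} (hN : 4 ≤ N) (heven : Even N) (hV : finrank F V = N + 1)
    (L : Set (Submodule F V)) (hdim : ∀ ℓ ∈ L, finrank F ℓ = 2)
    (hL : StrongBlock F V N 1 (⋃ ℓ ∈ L, ptsIn F V ℓ))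
    (hcard : L.ncard = N + N / 2) (hq : N + N / 2 ≤ Fintype.card F)
    (a b c d : Submodule F V) (ha : a ∈ L) (hb : b ∈ L) (hc : c ∈ L) (hd : d ∈ L)
    (hab : a ≠ b) (hcd : c ≠ d) (hac : a ≠ c) (had : a ≠ d) (hbc : b ≠ c) (hbd : b ≠ d)
    (hiab : a ⊓ b ≠ ⊥) (hicd : c ⊓ d ≠ ⊥) : False := by
  obtain ⟨n, hn⟩ := heven
  have hn2 : 2 ≤ n := by omega
  have hNd : N / 2 = n := by omega
  have hcard' : L.ncard = 3 * n := by rw [hcard, hNd]; omega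
  have hLfin : L.Finite := by
    by_contra h
    rw [Set.Infinite.ncard h] at hcard'
    omega
  have hra := hdim a ha
  have hrb := hdim b hb
  have hrc := hdim c hc
  have hrd := hdim d hd
  have hsupab : finrank F ↥(a ⊔ b) ≤ 3 := by
    have h1 := hp_one_le_finrank hiab
    have h2 := Submodule.finrank_sup_add_finrank_inf_eq a b
    omega
  have hpcd : finrank F ↥(c ⊓ d) ≤ 1 := hp_line_inf_rank_le_one hrc hrd hcd
  have hS₀ : finrank F ↥(a ⊔ b ⊔ (c ⊓ d)) ≤ 4 := by
    have := hp_finrank_sup_le (a ⊔ b) (c ⊓ d)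
    omega
  have hCD : ({a, b} : Set (Submodule F V)) ∪ {c, d} ⊆ L := by
    rintro ℓ ((rfl | rfl) | (rfl | rfl)) <;> assumption
  have hCDn : (({a, b} : Set (Submodule F V)) ∪ {c, d}).ncard = 4 := by
    have he : ({a, b} : Set (Submodule F V)) ∪ {c, d} = insert a (insert b {c, d}) := by
      ext x
      simp only [Set.mem_union, Set.mem_insert_iff, Set.mem_singleton_iff]
      tauto
    rw [he, Set.ncard_insert_of_notMem (by simp [hab, hac, had]),
      Set.ncard_insert_of_notMem (by simp [hbc, hbd]), Set.ncard_pair hcd]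
  have hdiffn : (L \ (({a, b} : Set (Submodule F V)) ∪ {c, d})).ncard = 3 * n - 4 := by
    rw [Set.ncard_diff hCD ((Set.toFinite _)), hCDn, hcard']
  obtain ⟨H, U, hH, hUH, hU, hcov⟩ :=
    hp_construct hV (by omega) L {a, b} {c, d} hLfin hCD hdim
      (a ⊔ b ⊔ (c ⊓ d)) (c ⊓ d) le_sup_right
      (by rintro ℓ (rfl | rfl)
          · exact le_sup_left.trans le_sup_left
          · exact le_sup_right.trans le_sup_left)
      (by rintro ℓ (rfl | rfl)
          · exact ⟨hicd, inf_le_left⟩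
          · exact ⟨hicd, inf_le_right⟩)
      (n - 2) (by rw [hdiffn]; omega)
      (by omega)
      (by rw [hdiffn]; omega)
  exact hp_contra hN hV L hLfin hdim hL (by omega) H U hH hUH hU hcov

lemma hp_case3 [Fintype F] {N : ℕ} (hN : 4 ≤ N) (heven : Even N) (hV : finrank F V = N + 1)
    (L : Set (Submodule F V)) (hdim : ∀ ℓ ∈ L, finrank F ℓ = 2)
    (hL : StrongBlock F V N 1 (⋃ ℓ ∈ L, ptsIn F V ℓ))
    (hcard : L.ncard = N + N / 2) (hq : N + N / 2 ≤ Fintype.card F)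
    (a b c : Submodule F V) (ha : a ∈ L) (hb : b ∈ L) (hc : c ∈ L)
    (hab : a ≠ b) (hac : a ≠ c) (hbc : b ≠ c)
    (hiab : a ⊓ b ≠ ⊥) (hiac : a ⊓ c ≠ ⊥) : False := by
  obtain ⟨n, hn⟩ := heven
  have hn2 : 2 ≤ n := by omega
  have hNd : N / 2 = n := by omega
  have hcard' : L.ncard = 3 * n := by rw [hcard, hNd]; omega
  have hLfin : L.Finite := by
    by_contra h
    rw [Set.Infinite.ncard h] at hcard'
    omega
  have hra := hdim a ha
  have hrb := hdim b hb
  have hrc := hdim c hc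
  have hsupab : finrank F ↥(a ⊔ b) ≤ 3 := by
    have h1 := hp_one_le_finrank hiab
    have h2 := Submodule.finrank_sup_add_finrank_inf_eq a b
    omega
  have hS₀ : finrank F ↥(a ⊔ b ⊔ c) ≤ 4 := by
    have h2 : a ⊓ c ≤ (a ⊔ b) ⊓ c := inf_le_inf_right c le_sup_left
    have h3 : (a ⊔ b) ⊓ c ≠ ⊥ := by
      intro hbot
      exact hiac (le_bot_iff.mp (hbot ▸ h2))
    have h4 := hp_one_le_finrank h3
    have h5 := Submodule.finrank_sup_add_finrank_inf_eq (a ⊔ b) c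
    omega
  have hCD : ({a, b, c} : Set (Submodule F V)) ∪ ∅ ⊆ L := by
    rw [Set.union_empty]
    rintro ℓ (rfl | rfl | rfl) <;> assumption
  have hCDn : (({a, b, c} : Set (Submodule F V)) ∪ ∅).ncard = 3 := by
    rw [Set.union_empty, Set.ncard_insert_of_notMem (by simp [hab, hac]), Set.ncard_pair hbc]
  have hdiffn : (L \ (({a, b, c} : Set (Submodule F V)) ∪ ∅)).ncard = 3 * n - 3 := by
    rw [Set.ncard_diff hCD ((Set.toFinite _)), hCDn, hcard']
  obtain ⟨H, U, hH, hUH, hU, hcov⟩ :=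
    hp_construct hV (by omega) L {a, b, c} ∅ hLfin hCD hdim
      (a ⊔ b ⊔ c) ⊥ bot_le
      (by rintro ℓ (rfl | rfl | rfl)
          · exact le_sup_left.trans le_sup_left
          · exact le_sup_right.trans le_sup_left
          · exact le_sup_right)
      (by rintro ℓ ⟨⟩)
      (n - 2) (by rw [hdiffn]; omega)
      (by omega)
      (by rw [hdiffn, finrank_bot]; omega)
  exact hp_contra hN hV L hLfin hdim hL (by omega) H U hH hUH hU hcov

end Cases



/-- if `L` is a higgledy-piggledy set of lines of `PG(N,q)`, `N ≥ 4` even,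
with `|L| = N + N/2 ≤ q`, then at most one (unordered) pair of lines of `L` intersects. -/
theorem stmt_8 (F : Type*) [Field F] [Fintype F] (N : ℕ) (hN : 4 ≤ N) (heven : Even N)
    (L : Set (Submodule F (Fin (N + 1) → F)))
    (hdim : ∀ ℓ ∈ L, finrank F ℓ = 2)
    (hL : StrongBlock F (Fin (N + 1) → F) N 1 (⋃ ℓ ∈ L, ptsIn F (Fin (N + 1) → F) ℓ))
    (hcard : L.ncard = N + N / 2) (hq : N + N / 2 ≤ Fintype.card F) :
    ∀ ℓ₁ ∈ L, ∀ ℓ₂ ∈ L, ∀ ℓ₃ ∈ L, ∀ ℓ₄ ∈ L,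
      ℓ₁ ≠ ℓ₂ → ℓ₃ ≠ ℓ₄ → ℓ₁ ⊓ ℓ₂ ≠ ⊥ → ℓ₃ ⊓ ℓ₄ ≠ ⊥ →
        ({ℓ₁, ℓ₂} : Set (Submodule F (Fin (N + 1) → F))) = {ℓ₃, ℓ₄} := by
  intro ℓ₁ h1 ℓ₂ h2 ℓ₃ h3 ℓ₄ h4 h12 h34 hi12 hi34
  by_contra hne
  have hV : finrank F (Fin (N + 1) → F) = N + 1 := Module.finrank_fin_fun F
  by_cases e13 : ℓ₁ = ℓ₃
  · have e24 : ℓ₂ ≠ ℓ₄ := by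
      intro h; exact hne (by rw [e13, h])
    subst e13
    exact hp_case3 hN heven hV L hdim hL hcard hq ℓ₁ ℓ₂ ℓ₄ h1 h2 h4 h12 h34 e24 hi12 hi34
  · by_cases e14 : ℓ₁ = ℓ₄
    · have e23 : ℓ₂ ≠ ℓ₃ := by
        intro h; exact hne (by rw [e14, h, Set.pair_comm])
      subst e14
      have hi34' : ℓ₁ ⊓ ℓ₃ ≠ ⊥ := by rwa [inf_comm]
      exact hp_case3 hN heven hV L hdim hL hcard hq ℓ₁ ℓ₂ ℓ₃ h1 h2 h3 h12 e13 e23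
        hi12 hi34'
    · by_cases e23 : ℓ₂ = ℓ₃
      · subst e23
        have hi12' : ℓ₂ ⊓ ℓ₁ ≠ ⊥ := by rwa [inf_comm]
        exact hp_case3 hN heven hV L hdim hL hcard hq ℓ₂ ℓ₁ ℓ₄ h2 h1 h4 (Ne.symm h12) h34
          e14 hi12' hi34
      · by_cases e24 : ℓ₂ = ℓ₄
        · subst e24
          have hi12' : ℓ₂ ⊓ ℓ₁ ≠ ⊥ := by rwa [inf_comm]
          have hi34' : ℓ₂ ⊓ ℓ₃ ≠ ⊥ := by rwa [inf_comm]
          exact hp_case3 hN heven hV L hdim hL hcard hq ℓ₂ ℓ₁ ℓ₃ h2 h1 h3 (Ne.symm h12)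
            e23 e13 hi12' hi34'
        · exact hp_case4 hN heven hV L hdim hL hcard hq ℓ₁ ℓ₂ ℓ₃ ℓ₄ h1 h2 h3 h4
            h12 h34 e13 e14 e23 e24 hi12 hi34
end

section
/- Let P be a point set of PG(N',q^{k+1}) with N+1 = (N'+1)(k+1), and suppose P is not contained in any F_q-linear set of rank at most N−k. Then the image of P under the field reduction map F_{N'+1,k+1,q} : PG(N',q^{k+1}) → PG(N,q) is a higgledy-piggledy set of pairwise disjoint k-subspaces in PG(N,q). -/
open Module

open HP

section Aux

variable {F F' V : Type*} [Field F] [Field F'] [Algebra F F']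
  [AddCommGroup V] [Module F V] [Module F' V] [IsScalarTower F F' V]

lemma finrank_restrictScalars_eq (p : Submodule F' V) [FiniteDimensional F F']
    [FiniteDimensional F' p] :
    Module.finrank F (p.restrictScalars F) = finrank F F' * finrank F' p := by
  have h1 : finrank F' (p.restrictScalars F) = finrank F' p :=
    LinearEquiv.finrank_eq (Submodule.restrictScalarsEquiv (R := F') (M := V) F p)
  rw [← h1]
  exact (Module.finrank_mul_finrank F F' (p.restrictScalars F)).symm

lemma restrictScalars_inf (p q : Submodule F' V) :
    (p ⊓ q).restrictScalars F = p.restrictScalars F ⊓ q.restrictScalars F := rfl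

end Aux

/-- field reduction. View `PG(N',q^(k+1))` over a degree-`(k+1)` field
extension `F ⊆ F'`; each point `P` yields, by restriction of scalars, a `k`-subspace
of `PG(N,q)` (with `N+1 = (N'+1)(k+1)`). If a point set `S` of `PG(N',q^(k+1))` is not
contained in any `F_q`-linear set of rank at most `N-k` (i.e. no `F`-subspace of rank
at most `N-k` meets all its reduced spread elements), then the image of `S` under field
reduction is a higgledy-piggledy set of pairwise disjoint `k`-subspaces of `PG(N,q)`. -/
theorem stmt_10 (F F' : Type*) [Field F] [Fintype F] [Field F'] [Fintype F'] [Algebra F F']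
    (N N' k : ℕ) (hdeg : finrank F F' = k + 1) (hN : N + 1 = (N' + 1) * (k + 1))
    (S : Set (Projectivization F' (Fin (N' + 1) → F')))
    (hno : ¬ ∃ κ : Submodule F (Fin (N' + 1) → F'), finrank F κ ≤ N - k ∧
      ∀ P ∈ S, (Submodule.restrictScalars F P.submodule) ⊓ κ ≠ ⊥) :
    (∀ P ∈ S, finrank F (Submodule.restrictScalars F P.submodule) = k + 1) ∧
    (∀ P ∈ S, ∀ Q ∈ S, P ≠ Q →
      (Submodule.restrictScalars F P.submodule) ⊓ (Submodule.restrictScalars F Q.submodule)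
        = ⊥) ∧
    StrongBlock F (Fin (N' + 1) → F') N k
      (⋃ κ ∈ (fun P : Projectivization F' (Fin (N' + 1) → F') =>
          Submodule.restrictScalars F P.submodule) '' S,
        ptsIn F (Fin (N' + 1) → F') κ) := by
  set X := (Fin (N' + 1) → F') with hX
  haveI : FiniteDimensional F F' := inferInstance
  haveI : FiniteDimensional F X := inferInstance
  have hk : k ≤ N := by
    have h1 : 1 * (k + 1) ≤ (N' + 1) * (k + 1) := Nat.mul_le_mul_right _ (Nat.succ_le_succ (Nat.zero_le _))
    omega
  have hXrank : finrank F X = N + 1 := by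
    have := Module.finrank_mul_finrank F F' X
    rw [hdeg, Module.finrank_fin_fun, mul_comm] at this
    omega
  -- rank of reduced elements
  have hrank : ∀ P : Projectivization F' X,
      finrank F (Submodule.restrictScalars F P.submodule) = k + 1 := by
    intro P
    rw [finrank_restrictScalars_eq, P.finrank_submodule, hdeg, mul_one]
  refine ⟨fun P _ => hrank P, ?_, ?_⟩
  · -- pairwise disjointness
    intro P _ Q _ hPQ
    by_contra hne
    have hne : P.submodule ⊓ Q.submodule ≠ ⊥ := fun h => hne (by
      rw [← restrictScalars_inf, h, Submodule.restrictScalars_bot])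
    have h0 : finrank F' ↥(P.submodule ⊓ Q.submodule) ≠ 0 := by
      simp only [ne_eq, Submodule.finrank_eq_zero]; exact hne
    have h1 : P.submodule ⊓ Q.submodule = P.submodule := by
      apply Submodule.eq_of_le_of_finrank_le inf_le_left
      rw [P.finrank_submodule]
      omega
    have h2 : P.submodule ⊓ Q.submodule = Q.submodule := by
      apply Submodule.eq_of_le_of_finrank_le inf_le_right
      rw [Q.finrank_submodule]
      omega
    exact hPQ (Projectivization.submodule_injective (h1 ▸ h2))
  · -- strong blocking
    intro W hW
    set SP : Set (Projectivization F X) :=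
      (⋃ κ ∈ (fun P : Projectivization F' X =>
          Submodule.restrictScalars F P.submodule) '' S, ptsIn F X κ) with hSP
    set U := spanPts F X (SP ∩ ptsIn F X W) with hU
    have hUW : U ≤ W := by
      rw [hU, spanPts]
      exact iSup₂_le fun P hP => hP.2
    by_contra hne
    have hUlt : U < W := lt_of_le_of_ne hUW hne
    have hUr : finrank F U ≤ N - k := by
      have := Submodule.finrank_lt_finrank_of_lt hUlt
      rw [hW] at this
      omega
    refine hno ⟨U, hUr, fun P hPS => ?_⟩
    set E := Submodule.restrictScalars F P.submodule with hE
    -- E meets W nontrivially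
    have hmeet : E ⊓ W ≠ ⊥ := by
      intro hbot
      have hsup : finrank F ↥(E ⊔ W) ≤ N + 1 := hXrank ▸ Submodule.finrank_le _
      have := Submodule.finrank_sup_add_finrank_inf_eq E W
      rw [hbot, hrank P, hW] at this
      simp only [finrank_bot] at this
      omega
    obtain ⟨v, hvEW, hv0⟩ := Submodule.ne_bot_iff _ |>.mp hmeet
    have hvE : v ∈ E := hvEW.1
    have hvW : v ∈ W := hvEW.2
    set Pt := Projectivization.mk F v hv0 with hPt
    have hPtsub : Pt.submodule = Submodule.span F {v} := Projectivization.submodule_mk v hv0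
    have hPtE : Pt ∈ ptsIn F X E := by
      simp only [ptsIn, Set.mem_setOf_eq, hPtsub]
      exact Submodule.span_le.mpr (Set.singleton_subset_iff.mpr hvE)
    have hPtW : Pt ∈ ptsIn F X W := by
      simp only [ptsIn, Set.mem_setOf_eq, hPtsub]
      exact Submodule.span_le.mpr (Set.singleton_subset_iff.mpr hvW)
    have hPtSP : Pt ∈ SP := by
      rw [hSP]
      exact Set.mem_biUnion (Set.mem_image_of_mem _ hPS) hPtE
    have hPtU : Pt.submodule ≤ U := by
      rw [hU, spanPts]
      exact le_iSup₂_of_le Pt ⟨hPtSP, hPtW⟩ le_rfl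
    have hvU : v ∈ U := hPtU (hPtsub ▸ Submodule.mem_span_singleton_self v)
    exact Submodule.ne_bot_iff _ |>.mpr ⟨v, ⟨hvE, hvU⟩, hv0⟩
end

section
/- In PG(1,q^3), any F_q-linear set intersects an F_q-subline in 0, 1, 2, 3, or q+1 points. -/
open Module

namespace HP

variable (F F' : Type*) [Field F] [Field F'] [Algebra F F']

/-- An `F_q`-subline of the projective line `PG(1, F')` over an extension `F ⊆ F'`:
the image of the standard embedded `PG(1, F)` under an element of `PGL(2, F')`. -/
def IsSubline (b : Set (Projectivization F' (Fin 2 → F'))) : Prop :=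
  ∃ g : (Fin 2 → F') ≃ₗ[F'] (Fin 2 → F'),
    b = {P | ∃ (v : Fin 2 → F) (hv : g (fun i => algebraMap F F' (v i)) ≠ 0),
      P = Projectivization.mk F' (g (fun i => algebraMap F F' (v i))) hv}

/-- An `F_q`-linear set of `PG(1, F')`: the set of points represented by the nonzero
vectors of an `F_q`-subspace `W` of the `F`-vector space `F'^2`. -/
def IsLinearSet (S : Set (Projectivization F' (Fin 2 → F'))) : Prop :=
  ∃ W : Submodule F (Fin 2 → F'),
    S = {P | ∃ (v : Fin 2 → F') (hv : v ≠ 0), v ∈ W ∧ P = Projectivization.mk F' v hv}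

end HP

open HP

section Aux
variable {F F' : Type*} [Field F] [Field F'] [Algebra F F']

noncomputable def emb2 : (Fin 2 → F) →ₗ[F] (Fin 2 → F') where
  toFun v := fun i => algebraMap F F' (v i)
  map_add' x y := by funext i; simp
  map_smul' a x := by funext i; simp [Algebra.smul_def]

lemma emb2_inj : Function.Injective (emb2 (F := F) (F' := F')) := by
  intro v w h
  funext i
  exact (algebraMap F F').injective (congrFun h i)

noncomputable def mulSmulL (w : Fin 2 → F') : F' →ₗ[F] (Fin 2 → F') where
  toFun μ := μ • w
  map_add' x y := by simp [add_smul]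
  map_smul' a μ := smul_assoc a μ w

/-- The key predicate: the point of the standard subline with coordinates `v`
(mapped by `g`) lies in the linear set of `W`. -/
def Kp (g : (Fin 2 → F') ≃ₗ[F'] (Fin 2 → F')) (W : Submodule F (Fin 2 → F'))
    (v : Fin 2 → F) : Prop :=
  ∃ μ : F', μ ≠ 0 ∧ μ • g (emb2 v) ∈ W

lemma vec_ne_zero {a b : F} (h : a ≠ 0 ∨ b ≠ 0) : ![a, b] ≠ (0 : Fin 2 → F) := by
  intro hz
  rcases h with h | h
  · exact h (by simpa using congrFun hz 0)
  · exact h (by simpa using congrFun hz 1)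

lemma card_projline (F : Type*) [Field F] [Fintype F] :
    Nat.card (Projectivization F (Fin 2 → F)) = Fintype.card F + 1 := by
  classical
  have h1 : ∀ t : F, (![1, t] : Fin 2 → F) ≠ 0 := fun t => vec_ne_zero (Or.inl one_ne_zero)
  have h0 : (![0, 1] : Fin 2 → F) ≠ 0 := vec_ne_zero (Or.inr one_ne_zero)
  let f : Option F → Projectivization F (Fin 2 → F) := fun o =>
    o.elim (Projectivization.mk F ![0,1] h0) (fun t => Projectivization.mk F ![1,t] (h1 t))
  have hbij : Function.Bijective f := by
    constructor
    · rintro (_|s) (_|t) h <;> simp only [f, Option.elim] at h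
      · rfl
      · exfalso
        rw [Projectivization.mk_eq_mk_iff'] at h
        obtain ⟨a, ha⟩ := h
        have h0' : a * 1 = 0 := by simpa using congrFun ha 0
        have h1' : a * t = 1 := by simpa using congrFun ha 1
        simp only [mul_one] at h0'
        rw [h0', zero_mul] at h1'
        exact zero_ne_one h1'
      · exfalso
        rw [Projectivization.mk_eq_mk_iff'] at h
        obtain ⟨a, ha⟩ := h
        have h0' : a * 0 = 1 := by simpa using congrFun ha 0
        simp at h0'
      · rw [Projectivization.mk_eq_mk_iff'] at h
        obtain ⟨a, ha⟩ := h
        have h0' : a * 1 = 1 := by simpa using congrFun ha 0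
        have h1' : a * t = s := by simpa using congrFun ha 1
        simp only [mul_one] at h0'
        rw [h0', one_mul] at h1'
        rw [h1']
    · intro P
      induction P using Projectivization.ind with
      | h v hv =>
        by_cases hv0 : v 0 = 0
        · refine ⟨none, ?_⟩
          have hv1 : v 1 ≠ 0 := by
            intro hv1
            apply hv
            funext i
            fin_cases i <;> simp [hv0, hv1]
          simp only [f, Option.elim]
          rw [Projectivization.mk_eq_mk_iff']
          refine ⟨(v 1)⁻¹, ?_⟩
          funext i
          fin_cases i <;> simp [hv0, inv_mul_cancel₀ hv1]
        · refine ⟨some (v 1 / v 0), ?_⟩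
          simp only [f, Option.elim]
          rw [Projectivization.mk_eq_mk_iff']
          refine ⟨(v 0)⁻¹, ?_⟩
          funext i
          fin_cases i
          · simp [inv_mul_cancel₀ hv0]
          · show (v 0)⁻¹ * v 1 = v 1 / v 0
            exact inv_mul_eq_div _ _
  calc Nat.card (Projectivization F (Fin 2 → F)) = Nat.card (Option F) :=
        (Nat.card_congr (Equiv.ofBijective f hbij)).symm
    _ = Fintype.card F + 1 := by simp [Nat.card_eq_fintype_card]

end Aux


set_option maxHeartbeats 2000000 in
/-- in `PG(1,q^3)`, any `F_q`-linear set intersects an `F_q`-subline in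
`0`, `1`, `2`, `3` or `q+1` points. -/
theorem stmt_11 (F F' : Type*) [Field F] [Fintype F] [Field F'] [Fintype F'] [Algebra F F']
    (hdeg : finrank F F' = 3)
    (S b : Set (Projectivization F' (Fin 2 → F')))
    (hS : IsLinearSet F F' S) (hb : IsSubline F F' b) :
    (S ∩ b).ncard = 0 ∨ (S ∩ b).ncard = 1 ∨ (S ∩ b).ncard = 2 ∨
      (S ∩ b).ncard = 3 ∨ (S ∩ b).ncard = Fintype.card F + 1 := by
  classical
  obtain ⟨W, rfl⟩ := hS
  obtain ⟨g, rfl⟩ := hb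
  have hge : ∀ v : Fin 2 → F, v ≠ 0 → g (emb2 v) ≠ 0 := by
    intro v hv h
    apply hv
    apply emb2_inj (F' := F')
    apply g.injective
    simpa using h
  have hgF : ∀ (d : F) (x : Fin 2 → F'), g (d • x) = d • g x := by
    intro d x
    rw [← algebraMap_smul F' d x, map_smul, algebraMap_smul]
  have hKinv : ∀ (d : F), d ≠ 0 → ∀ w : Fin 2 → F, Kp g W (d • w) → Kp g W w := by
    rintro d hd w ⟨μ, hμ, hμW⟩
    have had : algebraMap F F' d ≠ 0 := fun h =>
      hd ((algebraMap F F').injective (by rw [h, map_zero]))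
    refine ⟨μ * algebraMap F F' d, mul_ne_zero hμ had, ?_⟩
    have hsm : μ • g (emb2 (d • w)) = (μ * algebraMap F F' d) • g (emb2 w) := by
      rw [map_smul, hgF, ← algebraMap_smul F' d (g (emb2 w)), smul_smul]
    rwa [hsm] at hμW
  set Φ : Projectivization F (Fin 2 → F) → Projectivization F' (Fin 2 → F') :=
    fun P => Projectivization.mk F' (g (emb2 P.rep)) (hge _ P.rep_nonzero) with hΦdef
  have hΦmk : ∀ (v : Fin 2 → F) (hv : v ≠ 0),
      Φ (Projectivization.mk F v hv) = Projectivization.mk F' (g (emb2 v)) (hge v hv) := by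
    intro v hv
    obtain ⟨a, ha⟩ := Projectivization.exists_smul_eq_mk_rep F v hv
    rw [hΦdef]
    rw [Projectivization.mk_eq_mk_iff']
    refine ⟨algebraMap F F' (a : F), ?_⟩
    conv_rhs => rw [← ha]
    rw [Units.smul_def, map_smul, hgF, algebraMap_smul]
  have hΦinj : Function.Injective Φ := by
    intro P Q h
    induction P using Projectivization.ind with
    | h v hv =>
      induction Q using Projectivization.ind with
      | h w hw =>
        rw [hΦmk, hΦmk, Projectivization.mk_eq_mk_iff'] at h
        obtain ⟨c, hc⟩ := h
        have hc' : (emb2 v : Fin 2 → F') = c • emb2 w := by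
          apply g.injective
          rw [map_smul, hc]
        obtain ⟨i, hi⟩ : ∃ i, w i ≠ 0 := by
          by_contra hcon
          push_neg at hcon
          exact hw (funext fun i => hcon i)
        have hci : algebraMap F F' (v i) = c * algebraMap F F' (w i) := by
          simpa [emb2] using congrFun hc' i
        have hwi : algebraMap F F' (w i) ≠ 0 := by simpa using hi
        have hcd : c = algebraMap F F' (v i / w i) := by
          rw [map_div₀, eq_div_iff hwi, hci]
        have hvw : v = (v i / w i) • w := by
          apply emb2_inj (F' := F')
          rw [map_smul, ← algebraMap_smul F' (v i / w i) (emb2 w), ← hcd, ← hc']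
        rw [Projectivization.mk_eq_mk_iff']
        exact ⟨v i / w i, hvw.symm⟩
  set N : Set (Projectivization F (Fin 2 → F)) :=
    {P | ∃ (v : Fin 2 → F) (hv : v ≠ 0), P = Projectivization.mk F v hv ∧ Kp g W v} with hNdef
  have himage : Φ '' N =
      ({P | ∃ (v : Fin 2 → F') (hv : v ≠ 0), v ∈ W ∧ P = Projectivization.mk F' v hv} ∩
       {P | ∃ (v : Fin 2 → F) (hv : g (fun i => algebraMap F F' (v i)) ≠ 0),
        P = Projectivization.mk F' (g (fun i => algebraMap F F' (v i))) hv}) := by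
    ext P
    constructor
    · rintro ⟨Q, ⟨v, hv, rfl, μ, hμ, hμW⟩, rfl⟩
      rw [hΦmk]
      constructor
      · refine ⟨μ • g (emb2 v), smul_ne_zero hμ (hge v hv), hμW, ?_⟩
        rw [Projectivization.mk_eq_mk_iff']
        exact ⟨μ⁻¹, by rw [smul_smul, inv_mul_cancel₀ hμ, one_smul]⟩
      · exact ⟨v, hge v hv, rfl⟩
    · rintro ⟨⟨w, hw, hwW, hPw⟩, ⟨v, hv', hPv⟩⟩
      have hv : v ≠ 0 := by
        rintro rfl
        apply hv'
        have h0 : (fun i => algebraMap F F' ((0 : Fin 2 → F) i)) = (0 : Fin 2 → F') := by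
          funext i; simp
        rw [h0, map_zero]
      have hmk : Projectivization.mk F' w hw =
          Projectivization.mk F' (g (emb2 v)) (hge v hv) := by
        rw [← hPw, hPv]; exact rfl
      rw [Projectivization.mk_eq_mk_iff] at hmk
      obtain ⟨c, hc⟩ := hmk
      rw [Units.smul_def] at hc
      refine ⟨Projectivization.mk F v hv, ⟨v, hv, rfl, (c : F'), c.ne_zero, ?_⟩, ?_⟩
      · rw [hc]; exact hwW
      · rw [hΦmk]; exact hPv.symm
  have hcard : ({P | ∃ (v : Fin 2 → F') (hv : v ≠ 0), v ∈ W ∧ P = Projectivization.mk F' v hv} ∩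
       {P | ∃ (v : Fin 2 → F) (hv : g (fun i => algebraMap F F' (v i)) ≠ 0),
        P = Projectivization.mk F' (g (fun i => algebraMap F F' (v i))) hv}).ncard = N.ncard := by
    rw [← himage, Set.ncard_image_of_injective _ hΦinj]
  rw [hcard]
    -- === Part 2: the dichotomy ===
  set W' : Submodule F (Fin 2 → F') := W.restrictScalars F with hW'def
  set π : (Fin 2 → F') →ₗ[F] ((Fin 2 → F') ⧸ W') := W'.mkQ with hπdef
  set T : F → F → F' →ₗ[F] ((Fin 2 → F') ⧸ W') :=
    fun a b => π.comp (mulSmulL (g (emb2 ![a, b]))) with hTdef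
  have hTzero : ∀ (a b : F) (μ : F'), (T a b μ = 0 ↔ μ • g (emb2 ![a, b]) ∈ W) := by
    intro a b μ
    rw [hTdef]
    simp only [LinearMap.comp_apply]
    rw [show (mulSmulL (F := F) (g (emb2 ![a, b]))) μ = μ • g (emb2 ![a, b]) from rfl]
    rw [hπdef]
    simp only [Submodule.mkQ_apply, Submodule.Quotient.mk_eq_zero, hW'def,
      Submodule.restrictScalars_mem]
  have hTapp : ∀ (a b : F) (μ : F'), T a b μ = π (μ • g (emb2 ![a, b])) := fun a b μ => rfl
  have hTlin : ∀ a b c d t : F, T (a + t * c) (b + t * d) = T a b + t • T c d := by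
    intro a b c d t
    ext μ
    have hv : (![a + t * c, b + t * d] : Fin 2 → F) = ![a, b] + t • ![c, d] := by
      funext i; fin_cases i <;> simp
    rw [LinearMap.add_apply, LinearMap.smul_apply, hTapp, hTapp, hTapp]
    rw [hv, map_add]
    rw [LinearMap.map_smul (emb2 : (Fin 2 → F) →ₗ[F] (Fin 2 → F')) t ![c, d]]
    rw [map_add, hgF, smul_add, smul_comm μ t, map_add]
    rw [LinearMap.map_smul π t (μ • g (emb2 ![c, d]))]
  by_cases hall : ∀ v : Fin 2 → F, v ≠ 0 → Kp g W v
  · refine Or.inr (Or.inr (Or.inr (Or.inr ?_)))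
    have hNuniv : N = Set.univ := by
      ext P
      simp only [Set.mem_univ, iff_true, hNdef, Set.mem_setOf_eq]
      induction P using Projectivization.ind with
      | h v hv => exact ⟨v, hv, rfl, hall v hv⟩
    rw [hNuniv, Set.ncard_univ, card_projline]
  · push_neg at hall
    obtain ⟨v₀, hv₀, hKv₀⟩ := hall
    obtain ⟨a₀, b₀, hab₀, hK₀⟩ : ∃ a₀ b₀ : F, ¬(a₀ = 0 ∧ b₀ = 0) ∧ ¬ Kp g W ![a₀, b₀] := by
      refine ⟨v₀ 0, v₀ 1, ?_, ?_⟩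
      · rintro ⟨h1, h2⟩
        apply hv₀
        funext i; fin_cases i
        · exact h1
        · exact h2
      · have hveta : (![v₀ 0, v₀ 1] : Fin 2 → F) = v₀ := by
          funext i; fin_cases i <;> rfl
        rwa [hveta]
    have hker : LinearMap.ker (T a₀ b₀) = ⊥ := by
      rw [LinearMap.ker_eq_bot']
      intro μ hμ
      by_contra hμ0
      exact hK₀ ⟨μ, hμ0, (hTzero _ _ _).1 hμ⟩
    obtain ⟨a₁, b₁, hdet⟩ : ∃ a₁ b₁ : F, a₁ * b₀ - b₁ * a₀ = 1 := by
      by_cases h : a₀ = 0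
      · have hb : b₀ ≠ 0 := fun hb => hab₀ ⟨h, hb⟩
        refine ⟨b₀⁻¹, 0, by field_simp; ring⟩
      · refine ⟨0, -a₀⁻¹, by field_simp; ring⟩
    set vb : Basis (Fin 3) F F' := finBasisOfFinrankEq F F' hdeg with hvbdef
    set u : Fin 3 → ((Fin 2 → F') ⧸ W') := ⇑(T a₀ b₀) ∘ ⇑vb with hudef
    have hu : LinearIndependent F u := vb.linearIndependent.map' _ hker
    set U : Submodule F ((Fin 2 → F') ⧸ W') := Submodule.span F (Set.range u) with hUdef
    set bu : Basis (Fin 3) F U := Basis.span hu with hbudef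
    obtain ⟨Cc, hC⟩ := Submodule.exists_isCompl U
    set pr : ((Fin 2 → F') ⧸ W') →ₗ[F] U := U.linearProjOfIsCompl Cc hC with hprdef
    set φ : Fin 3 → (((Fin 2 → F') ⧸ W') →ₗ[F] F) := fun i => (bu.coord i).comp pr with hφdef
    have hφu : ∀ i j, φ i (u j) = if j = i then 1 else 0 := by
      intro i j
      have hmem : u j ∈ U := Submodule.subset_span (Set.mem_range_self j)
      have h1 : pr (u j) = ⟨u j, hmem⟩ :=
        Submodule.linearProjOfIsCompl_apply_left hC ⟨u j, hmem⟩
      have h2 : (⟨u j, hmem⟩ : U) = bu j := by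
        apply Subtype.ext
        rw [hbudef]
        exact congrArg Subtype.val (Basis.span_apply hu j).symm
      rw [hφdef]
      simp only [LinearMap.comp_apply, h1, h2, Basis.coord_apply, Basis.repr_self]
      exact Finsupp.single_apply
    set M : Matrix (Fin 3) (Fin 3) F := Matrix.of fun i j => φ i (T a₁ b₁ (vb j)) with hMdef
    set f : Polynomial F := (-M).charpoly with hfdef
    have hfmonic : f.Monic := (-M).charpoly_monic
    have hfdeg : f.natDegree = 3 := by
      rw [hfdef, Matrix.charpoly_natDegree_eq_dim, Fintype.card_fin]
    have hfeval : ∀ t : F, f.eval t =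
        (Matrix.of fun i j => (if i = j then t else 0) + M i j).det := by
      intro t
      rw [hfdef, Matrix.charpoly]
      show (Polynomial.evalRingHom t) (Matrix.charmatrix (-M)).det = _
      rw [RingHom.map_det]
      congr 1
      ext i j
      by_cases h : i = j
      · subst h
        simp [Matrix.charmatrix_apply, Matrix.diagonal_apply, sub_neg_eq_add]
      · simp [Matrix.charmatrix_apply, Matrix.diagonal_apply, h, sub_neg_eq_add]
    have hroot : ∀ t : F, Kp g W ![a₁ + t * a₀, b₁ + t * b₀] → f.eval t = 0 := by
      intro t hKt
      obtain ⟨μ, hμ, hμW⟩ := hKt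
      have hTμ : T (a₁ + t * a₀) (b₁ + t * b₀) μ = 0 := (hTzero _ _ _).2 hμW
      set c : Fin 3 → F := fun j => vb.repr μ j with hcdef
      have hμsum : (∑ j, c j • vb j) = μ := vb.sum_repr μ
      have hc0 : c ≠ 0 := by
        intro h
        apply hμ
        rw [← hμsum, h]
        simp
      have hsum : ∑ j, c j • (T (a₁ + t * a₀) (b₁ + t * b₀) (vb j)) = 0 := by
        have hstep : ∑ j, c j • (T (a₁ + t * a₀) (b₁ + t * b₀) (vb j)) =
            T (a₁ + t * a₀) (b₁ + t * b₀) (∑ j, c j • vb j) := by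
          rw [map_sum]
          congr 1
          funext j
          rw [map_smul]
        rw [hstep, hμsum, hTμ]
      have hentry : ∀ i j, (if i = j then t else 0) + M i j =
          φ i (T (a₁ + t * a₀) (b₁ + t * b₀) (vb j)) := by
        intro i j
        rw [hTlin a₁ b₁ a₀ b₀ t]
        simp only [LinearMap.add_apply, LinearMap.smul_apply, map_add, map_smul, smul_eq_mul]
        have hφij : φ i (T a₀ b₀ (vb j)) = if j = i then 1 else 0 := hφu i j
        rw [hφij, hMdef]
        by_cases h : i = j
        · subst h
          simp only [Matrix.of_apply, if_true, ite_true]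
          ring
        · simp only [Matrix.of_apply, if_neg h, if_neg (Ne.symm h)]
          ring
      have hA : (Matrix.of fun i j => (if i = j then t else 0) + M i j).det = 0 := by
        rw [← Matrix.exists_mulVec_eq_zero_iff]
        refine ⟨c, hc0, ?_⟩
        funext i
        simp only [Matrix.mulVec, dotProduct, Matrix.of_apply, Pi.zero_apply]
        rw [Finset.sum_congr rfl (fun j _ => by rw [hentry i j])]
        have hstep : ∑ j, φ i (T (a₁ + t * a₀) (b₁ + t * b₀) (vb j)) * c j =
            φ i (∑ j, c j • (T (a₁ + t * a₀) (b₁ + t * b₀) (vb j))) := by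
          rw [map_sum]
          congr 1
          funext j
          rw [map_smul, smul_eq_mul, mul_comm]
        rw [hstep, hsum, map_zero]
      rw [hfeval t, hA]
    have hwtne : ∀ t : F, (![a₁ + t * a₀, b₁ + t * b₀] : Fin 2 → F) ≠ 0 := by
      intro t h
      have h0 : a₁ + t * a₀ = 0 := by simpa using congrFun h 0
      have h1 : b₁ + t * b₀ = 0 := by simpa using congrFun h 1
      have hcon : (1 : F) = 0 := by
        linear_combination (-1 : F) * hdet + b₀ * h0 - a₀ * h1
      exact one_ne_zero hcon
    have hNsub : N ⊆ (fun t : F =>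
        Projectivization.mk F ![a₁ + t * a₀, b₁ + t * b₀] (hwtne t)) ''
        {t : F | f.eval t = 0} := by
      rintro P ⟨v, hv, rfl, hKv⟩
      obtain ⟨δ, hδdef⟩ : ∃ δ : F, δ = v 0 * b₀ - v 1 * a₀ := ⟨_, rfl⟩
      have hδ : δ ≠ 0 := by
        intro hδ0
        apply hK₀
        have hprop : ∃ d : F, d ≠ 0 ∧ v = d • ![a₀, b₀] := by
          by_cases h : a₀ = 0
          · have hb : b₀ ≠ 0 := fun hb => hab₀ ⟨h, hb⟩
            have hv0 : v 0 = 0 := by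
              have : v 0 * b₀ = 0 := by
                linear_combination hδdef.symm + hδ0 + (v 1) * h
              exact (mul_eq_zero.1 this).resolve_right hb
            have hv1 : v 1 ≠ 0 := by
              intro h1
              apply hv
              funext i; fin_cases i
              · exact hv0
              · exact h1
            refine ⟨v 1 / b₀, div_ne_zero hv1 hb, ?_⟩
            funext i; fin_cases i
            · show v 0 = v 1 / b₀ * a₀
              rw [h, hv0, mul_zero]
            · show v 1 = v 1 / b₀ * b₀
              field_simp
          · have hv0 : v 0 ≠ 0 := by
              intro h0
              have hv1 : v 1 * a₀ = 0 := by
                linear_combination (-1 : F) * hδdef.symm + (-1 : F) * hδ0 + b₀ * h0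
              have : v 1 = 0 := (mul_eq_zero.1 hv1).resolve_right h
              apply hv
              funext i; fin_cases i
              · exact h0
              · exact this
            refine ⟨v 0 / a₀, div_ne_zero hv0 h, ?_⟩
            funext i; fin_cases i
            · show v 0 = v 0 / a₀ * a₀
              field_simp
            · show v 1 = v 0 / a₀ * b₀
              rw [div_mul_eq_mul_div, eq_div_iff h]
              linear_combination (-1 : F) * hδdef.symm + (-1 : F) * hδ0
        obtain ⟨d, hd, hvd⟩ := hprop
        exact hKinv d hd _ (by rw [← hvd]; exact hKv)
      obtain ⟨x, hx0, hx1⟩ : ∃ x : F, v 0 - δ * a₁ = x * a₀ ∧ v 1 - δ * b₁ = x * b₀ := by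
        by_cases h : a₀ = 0
        · have hb : b₀ ≠ 0 := fun hb => hab₀ ⟨h, hb⟩
          refine ⟨(v 1 - δ * b₁) / b₀, ?_, (div_mul_cancel₀ _ hb).symm⟩
          rw [h, mul_zero]
          linear_combination (-a₁) * hδdef + (-(v 0)) * hdet + (a₁ * v 1 - v 0 * b₁) * h
        · refine ⟨(v 0 - δ * a₁) / a₀, (div_mul_cancel₀ _ h).symm, ?_⟩
          rw [div_mul_eq_mul_div, eq_div_iff h]
          linear_combination hδdef + δ * hdet
      have hveq : v = δ • ![a₁ + x / δ * a₀, b₁ + x / δ * b₀] := by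
        funext i; fin_cases i
        · show v 0 = δ * (a₁ + x / δ * a₀)
          have hexp : δ * (a₁ + x / δ * a₀) = δ * a₁ + x * a₀ := by
            field_simp
          rw [hexp, ← hx0]
          ring
        · show v 1 = δ * (b₁ + x / δ * b₀)
          have hexp : δ * (b₁ + x / δ * b₀) = δ * b₁ + x * b₀ := by
            field_simp
          rw [hexp, ← hx1]
          ring
      refine ⟨x / δ, ?_, ?_⟩
      · show f.eval (x / δ) = 0
        apply hroot
        exact hKinv δ hδ _ (by rw [← hveq]; exact hKv)
      · show Projectivization.mk F ![a₁ + x / δ * a₀, b₁ + x / δ * b₀] (hwtne (x / δ)) =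
          Projectivization.mk F v hv
        rw [Projectivization.mk_eq_mk_iff']
        exact ⟨δ⁻¹, by rw [hveq, smul_smul, inv_mul_cancel₀ hδ, one_smul]⟩
    have hfin : f ≠ 0 := hfmonic.ne_zero
    have hzset : {t : F | f.eval t = 0} = ↑f.roots.toFinset := by
      ext t
      simp [Polynomial.mem_roots, hfin, Polynomial.IsRoot]
    have hle : N.ncard ≤ 3 := by
      calc N.ncard ≤ ((fun t : F =>
            Projectivization.mk F ![a₁ + t * a₀, b₁ + t * b₀] (hwtne t)) ''
            {t : F | f.eval t = 0}).ncard := Set.ncard_le_ncard hNsub (Set.toFinite _)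
        _ ≤ ({t : F | f.eval t = 0}).ncard := Set.ncard_image_le (Set.toFinite _)
        _ = f.roots.toFinset.card := by rw [hzset, Set.ncard_coe_finset]
        _ ≤ Multiset.card f.roots := f.roots.toFinset_card_le
        _ ≤ f.natDegree := f.card_roots'
        _ = 3 := hfdeg
    obtain h | h | h | h : N.ncard = 0 ∨ N.ncard = 1 ∨ N.ncard = 2 ∨ N.ncard = 3 := by clear * - hle; omega
    · exact Or.inl h
    · exact Or.inr (Or.inl h)
    · exact Or.inr (Or.inr (Or.inl h))
    · exact Or.inr (Or.inr (Or.inr (Or.inl h)))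
end

section
/- Only-if direction: Let m ≥ 1 and q > 2. If there exist three distinct F_q-sublines of PG(1,q^m) pairwise intersecting in exactly 2 points but with empty common intersection, then m is even. -/
open Module

open HP

open HP Projectivization Polynomial IntermediateField

section Aux

variable {F F' : Type*} [Field F] [Field F'] [Algebra F F']

lemma mk_smul_eq {v : Fin 2 → F'} (hv : v ≠ 0) {k : F'} (hk : k ≠ 0) :
    Projectivization.mk F' (k • v) (smul_ne_zero hk hv) = Projectivization.mk F' v hv :=
  (mk_eq_mk_iff' F' _ _ _ hv).mpr ⟨k, rfl⟩

lemma indep_of_ne {v w : Fin 2 → F'} (hv : v ≠ 0) (hw : w ≠ 0)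
    (h : Projectivization.mk F' v hv ≠ Projectivization.mk F' w hw) :
    LinearIndependent F' ![v, w] := by
  rw [LinearIndependent.pair_iff' hv]
  intro a ha
  apply h
  have ha0 : a ≠ 0 := by rintro rfl; rw [zero_smul] at ha; exact hw ha.symm
  rw [mk_eq_mk_iff' F' v w hv hw]
  exact ⟨a⁻¹, by rw [← ha, smul_smul, inv_mul_cancel₀ ha0, one_smul]⟩

lemma pair_coeff {p q : Fin 2 → F'} (hind : LinearIndependent F' ![p, q]) {A B C D : F'}
    (h : A • p + B • q = C • p + D • q) : A = C ∧ B = D := by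
  obtain ⟨h1, h2⟩ := LinearIndependent.pair_iff.mp hind (A - C) (B - D)
    (by linear_combination (norm := module) h)
  exact ⟨sub_eq_zero.mp h1, sub_eq_zero.mp h2⟩

lemma subline_module {b : Set (Projectivization F' (Fin 2 → F'))} (hb : IsSubline F F' b) :
    ∃ W : Submodule F (Fin 2 → F'), finrank F W = 2 ∧
      ∀ (v : Fin 2 → F') (hv : v ≠ 0),
        (Projectivization.mk F' v hv ∈ b ↔ ∃ k : F', k ≠ 0 ∧ k • v ∈ W) := by
  obtain ⟨g, rfl⟩ := hb
  set ι : (Fin 2 → F) →ₗ[F] (Fin 2 → F') := LinearMap.compLeft (Algebra.linearMap F F') (Fin 2)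
    with hι
  set L : (Fin 2 → F) →ₗ[F] (Fin 2 → F') := (g.toLinearMap.restrictScalars F).comp ι with hL
  have hLapp : ∀ u : Fin 2 → F, L u = g (fun i => algebraMap F F' (u i)) := by
    intro u; rfl
  have hLinj : Function.Injective L := by
    intro u w h
    rw [hLapp, hLapp] at h
    have h2 := g.injective h
    funext i
    exact (algebraMap F F').injective (congrFun h2 i)
  refine ⟨LinearMap.range L, ?_, ?_⟩
  · rw [LinearMap.finrank_range_of_inj hLinj, Module.finrank_fin_fun]
  · intro v hv
    constructor
    · rintro ⟨u, hu, huv⟩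
      rw [mk_eq_mk_iff] at huv
      obtain ⟨a, ha⟩ := huv
      refine ⟨(a⁻¹ : F'ˣ), Units.ne_zero _, ⟨u, ?_⟩⟩
      rw [hLapp, ← ha, Units.smul_def, smul_smul, ← Units.val_mul, inv_mul_cancel, Units.val_one,
        one_smul]
    · rintro ⟨k, hk, u, hu⟩
      have hgu : g (fun i => algebraMap F F' (u i)) ≠ 0 := by
        rw [← hLapp, hu]; exact smul_ne_zero hk hv
      refine ⟨u, hgu, ?_⟩
      refine ((mk_eq_mk_iff' F' _ _ hgu hv).mpr ⟨k, ?_⟩).symm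
      rw [← hLapp u, hu]

lemma span_pair_eq [FiniteDimensional F F'] {W : Submodule F (Fin 2 → F')}
    (hW : finrank F W = 2) {x y : Fin 2 → F'} (hx : x ∈ W) (hy : y ∈ W)
    (hind : LinearIndependent F' ![x, y]) : W = Submodule.span F {x, y} := by
  have hindF : LinearIndependent F ![x, y] :=
    hind.restrict_scalars' F
  have hle : Submodule.span F {x, y} ≤ W := by
    rw [Submodule.span_le]
    rintro z hz
    rcases hz with rfl | rfl
    · exact hx
    · exact hy
  have hr : ({x, y} : Set (Fin 2 → F')) = Set.range ![x, y] := by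
    ext z
    simp [Fin.exists_fin_two, eq_comm, or_comm]
  refine (Submodule.eq_of_le_of_finrank_le hle ?_).symm
  rw [hW, hr, finrank_span_eq_card hindF]
  simp

lemma norm_rep {b : Set (Projectivization F' (Fin 2 → F'))} {W : Submodule F (Fin 2 → F')}
    (hmem : ∀ (v : Fin 2 → F') (hv : v ≠ 0),
      (Projectivization.mk F' v hv ∈ b ↔ ∃ k : F', k ≠ 0 ∧ k • v ∈ W))
    {x y : Fin 2 → F'} (hy0 : y ≠ 0)
    (hspan : W = Submodule.span F {x, y})
    {X : Projectivization F' (Fin 2 → F')} (hX : X ∈ b) (hXy : X ≠ Projectivization.mk F' y hy0) :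
    ∃ (a : F) (h : x + algebraMap F F' a • y ≠ 0),
      X = Projectivization.mk F' (x + algebraMap F F' a • y) h := by
  obtain ⟨k, hk, hkW⟩ := (hmem X.rep (rep_nonzero X)).mp (by rwa [mk_rep])
  rw [hspan, Submodule.mem_span_pair] at hkW
  obtain ⟨s, t, hst⟩ := hkW
  rw [← algebraMap_smul F' s x, ← algebraMap_smul F' t y] at hst
  have hs : (algebraMap F F') s ≠ 0 := by
    intro h0
    apply hXy
    rw [h0, zero_smul, zero_add] at hst
    have ht : (algebraMap F F') t ≠ 0 := by
      intro h1
      rw [h1, zero_smul] at hst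
      exact smul_ne_zero hk (rep_nonzero X) hst.symm
    have hrep : (k⁻¹ * algebraMap F F' t) • y = X.rep := by
      rw [mul_smul, hst, smul_smul, inv_mul_cancel₀ hk, one_smul]
    rw [← mk_rep X]
    exact (mk_eq_mk_iff' F' X.rep y (rep_nonzero X) hy0).mpr ⟨_, hrep⟩
  refine ⟨t / s, ?_, ?_⟩
  · intro h0
    have : (algebraMap F F' s) • (x + algebraMap F F' (t / s) • y) = k • X.rep := by
      rw [map_div₀, smul_add, smul_smul, mul_div_cancel₀ _ hs, hst]
    rw [h0, smul_zero] at this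
    exact smul_ne_zero hk (rep_nonzero X) this.symm
  · have key : (algebraMap F F' s) • (x + algebraMap F F' (t / s) • y) = k • X.rep := by
      rw [map_div₀, smul_add, smul_smul, mul_div_cancel₀ _ hs, hst]
    refine Eq.trans (mk_rep X).symm ?_
    refine (mk_eq_mk_iff' F' X.rep _ (rep_nonzero X) _).mpr ⟨k⁻¹ * algebraMap F F' s, ?_⟩
    rw [mul_smul, key, smul_smul, inv_mul_cancel₀ hk, one_smul]

end Aux

/-- only-if direction: for `m ≥ 1` and `q > 2`, if there exist three
distinct `F_q`-sublines of `PG(1,q^m)` pairwise intersecting in exactly two points but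
with empty common intersection, then `m` is even. -/
theorem stmt_13 (F F' : Type*) [Field F] [Fintype F] [Field F'] [Fintype F'] [Algebra F F']
    (m : ℕ) (hm : 1 ≤ m) (hdeg : finrank F F' = m) (hq : 2 < Fintype.card F)
    (hex : ∃ b₁ b₂ b₃ : Set (Projectivization F' (Fin 2 → F')),
      IsSubline F F' b₁ ∧ IsSubline F F' b₂ ∧ IsSubline F F' b₃ ∧
      b₁ ≠ b₂ ∧ b₁ ≠ b₃ ∧ b₂ ≠ b₃ ∧
      (b₁ ∩ b₂).ncard = 2 ∧ (b₁ ∩ b₃).ncard = 2 ∧ (b₂ ∩ b₃).ncard = 2 ∧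
      b₁ ∩ b₂ ∩ b₃ = ∅) :
    Even m := by
  classical
  obtain ⟨b₁, b₂, b₃, hb₁, hb₂, hb₃, h12, h13, h23, hn12, hn13, hn23, hE⟩ := hex
  haveI : Module.Finite F F' := Module.finite_iff_finite.mpr inferInstance
  obtain ⟨W₁, hr₁, hm₁⟩ := subline_module hb₁
  obtain ⟨W₂, hr₂, hm₂⟩ := subline_module hb₂
  obtain ⟨W₃, hr₃, hm₃⟩ := subline_module hb₃
  obtain ⟨P, Q, hPQ, h12s⟩ := Set.ncard_eq_two.mp hn12
  obtain ⟨R, S, hRS, h13s⟩ := Set.ncard_eq_two.mp hn13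
  obtain ⟨T, U, hTU, h23s⟩ := Set.ncard_eq_two.mp hn23
  have hP12 : P ∈ b₁ ∩ b₂ := h12s ▸ Set.mem_insert _ _
  have hQ12 : Q ∈ b₁ ∩ b₂ := h12s ▸ Set.mem_insert_of_mem _ rfl
  have hR13 : R ∈ b₁ ∩ b₃ := h13s ▸ Set.mem_insert _ _
  have hS13 : S ∈ b₁ ∩ b₃ := h13s ▸ Set.mem_insert_of_mem _ rfl
  have hT23 : T ∈ b₂ ∩ b₃ := h23s ▸ Set.mem_insert _ _
  have hU23 : U ∈ b₂ ∩ b₃ := h23s ▸ Set.mem_insert_of_mem _ rfl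
  have hnot : ∀ X, X ∈ b₁ → X ∈ b₂ → X ∈ b₃ → False := by
    intro X h1 h2 h3
    have : X ∈ b₁ ∩ b₂ ∩ b₃ := ⟨⟨h1, h2⟩, h3⟩
    rw [hE] at this
    exact this
  have hR2 : R ∉ b₂ := fun h => hnot R hR13.1 h hR13.2
  have hS2 : S ∉ b₂ := fun h => hnot S hS13.1 h hS13.2
  have hT1 : T ∉ b₁ := fun h => hnot T h hT23.1 hT23.2
  have hU1 : U ∉ b₁ := fun h => hnot U h hU23.1 hU23.2
  have hRP : R ≠ P := fun h => hR2 (by rw [h]; exact hP12.2)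
  have hRQ : R ≠ Q := fun h => hR2 (by rw [h]; exact hQ12.2)
  have hSP : S ≠ P := fun h => hS2 (by rw [h]; exact hP12.2)
  have hSQ : S ≠ Q := fun h => hS2 (by rw [h]; exact hQ12.2)
  have hTP : T ≠ P := fun h => hT1 (by rw [h]; exact hP12.1)
  have hTQ : T ≠ Q := fun h => hT1 (by rw [h]; exact hQ12.1)
  have hUP : U ≠ P := fun h => hU1 (by rw [h]; exact hP12.1)
  have hUQ : U ≠ Q := fun h => hU1 (by rw [h]; exact hQ12.1)
  -- representatives of P and Q inside W₁
  obtain ⟨kp, hkp, hpW⟩ := (hm₁ P.rep (Projectivization.rep_nonzero P)).mp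
    (by rw [Projectivization.mk_rep]; exact hP12.1)
  obtain ⟨kq, hkq, hqW⟩ := (hm₁ Q.rep (Projectivization.rep_nonzero Q)).mp
    (by rw [Projectivization.mk_rep]; exact hQ12.1)
  set p : Fin 2 → F' := kp • P.rep with hpdef
  set q : Fin 2 → F' := kq • Q.rep with hqdef
  have hp0 : p ≠ 0 := smul_ne_zero hkp (Projectivization.rep_nonzero P)
  have hq0 : q ≠ 0 := smul_ne_zero hkq (Projectivization.rep_nonzero Q)
  have hPp : Projectivization.mk F' p hp0 = P :=
    (mk_smul_eq (Projectivization.rep_nonzero P) hkp).trans (Projectivization.mk_rep P)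
  have hQq : Projectivization.mk F' q hq0 = Q :=
    (mk_smul_eq (Projectivization.rep_nonzero Q) hkq).trans (Projectivization.mk_rep Q)
  have hpqind : LinearIndependent F' ![p, q] :=
    indep_of_ne hp0 hq0 (by rw [hPp, hQq]; exact hPQ)
  have hW₁span : W₁ = Submodule.span F {p, q} := span_pair_eq hr₁ hpW hqW hpqind
  -- representatives of P and Q inside W₂
  obtain ⟨lam, hlam, hlpW⟩ := (hm₂ p hp0).mp (by rw [hPp]; exact hP12.2)
  obtain ⟨mu, hmu, hmqW⟩ := (hm₂ q hq0).mp (by rw [hQq]; exact hQ12.2)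
  have hlmind : LinearIndependent F' ![lam • p, mu • q] := by
    have h2 := hpqind.units_smul ![Units.mk0 lam hlam, Units.mk0 mu hmu]
    convert h2 using 1
    funext i; fin_cases i <;> simp [Units.smul_def]
  have hW₂span : W₂ = Submodule.span F {lam • p, mu • q} :=
    span_pair_eq hr₂ hlpW hmqW hlmind
  set α : F' := mu * lam⁻¹ with hαdef
  have hα0 : α ≠ 0 := mul_ne_zero hmu (inv_ne_zero hlam)
  -- α is not in F (else b₁ = b₂)
  have hαF : α ∉ (algebraMap F F').range := by
    rintro ⟨gα, hgα⟩
    have hg0 : gα ≠ 0 := by rintro rfl; rw [map_zero] at hgα; exact hα0 hgα.symm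
    have hgmap : algebraMap F F' gα ≠ 0 := (_root_.map_ne_zero _).mpr hg0
    have hmu' : mu = algebraMap F F' gα * lam := by
      rw [hgα, hαdef]; field_simp
    apply h12
    ext X
    induction X using Projectivization.ind with
    | h v hv =>
      rw [hm₁ v hv, hm₂ v hv]
      constructor
      · rintro ⟨k, hk, hkW⟩
        rw [hW₁span, Submodule.mem_span_pair] at hkW
        obtain ⟨s, t, hst⟩ := hkW
        rw [← algebraMap_smul F' s p, ← algebraMap_smul F' t q] at hst
        refine ⟨lam * k, mul_ne_zero hlam hk, ?_⟩
        rw [hW₂span, Submodule.mem_span_pair]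
        refine ⟨s, t / gα, ?_⟩
        rw [← algebraMap_smul F' s, ← algebraMap_smul F' (t / gα), map_div₀,
          mul_smul lam k v, ← hst, hmu']
        match_scalars <;> field_simp <;> ring
      · rintro ⟨k, hk, hkW⟩
        rw [hW₂span, Submodule.mem_span_pair] at hkW
        obtain ⟨s, t, hst⟩ := hkW
        rw [← algebraMap_smul F' s, ← algebraMap_smul F' t, hmu'] at hst
        refine ⟨lam⁻¹ * k, mul_ne_zero (inv_ne_zero hlam) hk, ?_⟩
        rw [hW₁span, Submodule.mem_span_pair]
        refine ⟨s, t * gα, ?_⟩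
        rw [← algebraMap_smul F' s p, ← algebraMap_smul F' (t * gα), map_mul,
          mul_smul lam⁻¹ k v, ← hst]
        match_scalars <;> field_simp <;> ring
  -- normalized representatives of R, S on b₁ and T, U on b₂
  obtain ⟨aa, hvR0, hRa⟩ := norm_rep hm₁ hq0 hW₁span hR13.1 fun h => hRQ (h.trans hQq)
  obtain ⟨bb, hvS0, hSb⟩ := norm_rep hm₁ hq0 hW₁span hS13.1 fun h => hSQ (h.trans hQq)
  have hmq0 : mu • q ≠ 0 := smul_ne_zero hmu hq0
  have hmqQ : Projectivization.mk F' (mu • q) hmq0 = Q := (mk_smul_eq hq0 hmu).trans hQq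
  obtain ⟨cc, hvT0, hTc⟩ := norm_rep hm₂ hmq0 hW₂span hT23.1 fun h => hTQ (h.trans hmqQ)
  obtain ⟨dd, hvU0, hUd⟩ := norm_rep hm₂ hmq0 hW₂span hU23.1 fun h => hUQ (h.trans hmqQ)
  have hab : aa ≠ bb := by
    rintro rfl
    exact hRS (hRa.trans hSb.symm)
  have hcd : cc ≠ dd := by
    rintro rfl
    exact hTU (hTc.trans hUd.symm)
  have hlp0 : lam • p ≠ 0 := smul_ne_zero hlam hp0
  have hlpP : Projectivization.mk F' (lam • p) hlp0 = P := (mk_smul_eq hp0 hlam).trans hPp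
  have hc0 : cc ≠ 0 := by
    rintro rfl
    apply hTP
    rw [hTc]
    refine ((mk_eq_mk_iff' F' _ _ hvT0 hlp0).mpr ⟨1, by simp⟩).trans hlpP
  have hd0 : dd ≠ 0 := by
    rintro rfl
    apply hUP
    rw [hUd]
    refine ((mk_eq_mk_iff' F' _ _ hvU0 hlp0).mpr ⟨1, by simp⟩).trans hlpP
  -- memberships in W₃
  obtain ⟨ν₁, hν₁, hRW₃⟩ := (hm₃ _ hvR0).mp (by rw [← hRa]; exact hR13.2)
  obtain ⟨ν₂, hν₂, hSW₃⟩ := (hm₃ _ hvS0).mp (by rw [← hSb]; exact hS13.2)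
  obtain ⟨τ₁, hτ₁, hTW₃⟩ := (hm₃ _ hvT0).mp (by rw [← hTc]; exact hT23.2)
  obtain ⟨τ₂, hτ₂, hUW₃⟩ := (hm₃ _ hvU0).mp (by rw [← hUd]; exact hU23.2)
  have hvRS : LinearIndependent F'
      ![p + algebraMap F F' aa • q, p + algebraMap F F' bb • q] := by
    rw [LinearIndependent.pair_iff' hvR0]
    intro ee he
    have h2 := pair_coeff hpqind (A := ee) (B := ee * algebraMap F F' aa)
      (C := 1) (D := algebraMap F F' bb) (by linear_combination (norm := module) he)
    exact hab ((algebraMap F F').injective (by rw [← h2.2, h2.1, one_mul]))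
  have hνind : LinearIndependent F'
      ![ν₁ • (p + algebraMap F F' aa • q), ν₂ • (p + algebraMap F F' bb • q)] := by
    have h2 := hvRS.units_smul ![Units.mk0 ν₁ hν₁, Units.mk0 ν₂ hν₂]
    convert h2 using 1
    funext i; fin_cases i <;> simp [Units.smul_def]
  have hW₃span : W₃ = Submodule.span F
      {ν₁ • (p + algebraMap F F' aa • q), ν₂ • (p + algebraMap F F' bb • q)} :=
    span_pair_eq hr₃ hRW₃ hSW₃ hνind
  -- coefficient equations for T
  rw [hW₃span, Submodule.mem_span_pair] at hTW₃ hUW₃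
  obtain ⟨ee, ff, hef⟩ := hTW₃
  obtain ⟨ee', ff', hef'⟩ := hUW₃
  rw [← algebraMap_smul F' ee, ← algebraMap_smul F' ff] at hef
  rw [← algebraMap_smul F' ee', ← algebraMap_smul F' ff'] at hef'
  obtain ⟨hT1a, hT1b⟩ := pair_coeff hpqind
    (A := algebraMap F F' ee * ν₁ + algebraMap F F' ff * ν₂)
    (B := algebraMap F F' ee * ν₁ * algebraMap F F' aa
      + algebraMap F F' ff * ν₂ * algebraMap F F' bb)
    (C := τ₁ * lam) (D := τ₁ * (algebraMap F F' cc * mu))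
    (by linear_combination (norm := module) hef)
  obtain ⟨hU1a, hU1b⟩ := pair_coeff hpqind
    (A := algebraMap F F' ee' * ν₁ + algebraMap F F' ff' * ν₂)
    (B := algebraMap F F' ee' * ν₁ * algebraMap F F' aa
      + algebraMap F F' ff' * ν₂ * algebraMap F F' bb)
    (C := τ₂ * lam) (D := τ₂ * (algebraMap F F' dd * mu))
    (by linear_combination (norm := module) hef')
  have hcmap : algebraMap F F' cc ≠ 0 := (_root_.map_ne_zero _).mpr hc0
  have hdmap : algebraMap F F' dd ≠ 0 := (_root_.map_ne_zero _).mpr hd0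
  -- the four span coefficients are nonzero
  have he0 : ee ≠ 0 := by
    rintro rfl
    simp only [map_zero, zero_mul, zero_add] at hT1a hT1b
    have h2 : lam * algebraMap F F' bb = algebraMap F F' cc * mu :=
      mul_left_cancel₀ hτ₁ (by linear_combination hT1b - algebraMap F F' bb * hT1a)
    exact hαF ⟨bb / cc, by rw [map_div₀, hαdef]; field_simp; linear_combination h2⟩
  have hf0 : ff ≠ 0 := by
    rintro rfl
    simp only [map_zero, zero_mul, add_zero] at hT1a hT1b
    have h2 : lam * algebraMap F F' aa = algebraMap F F' cc * mu :=
      mul_left_cancel₀ hτ₁ (by linear_combination hT1b - algebraMap F F' aa * hT1a)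
    exact hαF ⟨aa / cc, by rw [map_div₀, hαdef]; field_simp; linear_combination h2⟩
  have he'0 : ee' ≠ 0 := by
    rintro rfl
    simp only [map_zero, zero_mul, zero_add] at hU1a hU1b
    have h2 : lam * algebraMap F F' bb = algebraMap F F' dd * mu :=
      mul_left_cancel₀ hτ₂ (by linear_combination hU1b - algebraMap F F' bb * hU1a)
    exact hαF ⟨bb / dd, by rw [map_div₀, hαdef]; field_simp; linear_combination h2⟩
  have hf'0 : ff' ≠ 0 := by
    rintro rfl
    simp only [map_zero, zero_mul, add_zero] at hU1a hU1b
    have h2 : lam * algebraMap F F' aa = algebraMap F F' dd * mu :=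
      mul_left_cancel₀ hτ₂ (by linear_combination hU1b - algebraMap F F' aa * hU1a)
    exact hαF ⟨aa / dd, by rw [map_div₀, hαdef]; field_simp; linear_combination h2⟩
  -- eliminate τ₁, τ₂
  have G₁ : algebraMap F F' ee * ν₁ * (algebraMap F F' aa * lam - algebraMap F F' cc * mu)
      + algebraMap F F' ff * ν₂ * (algebraMap F F' bb * lam - algebraMap F F' cc * mu) = 0 := by
    linear_combination lam * hT1b - (algebraMap F F' cc * mu) * hT1a
  have G₂ : algebraMap F F' ee' * ν₁ * (algebraMap F F' aa * lam - algebraMap F F' dd * mu)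
      + algebraMap F F' ff' * ν₂ * (algebraMap F F' bb * lam - algebraMap F F' dd * mu) = 0 := by
    linear_combination lam * hU1b - (algebraMap F F' dd * mu) * hU1a
  -- eliminate ν₁, ν₂
  have hEν : ν₁ * ν₂ *
      (algebraMap F F' ee * algebraMap F F' ff'
          * (algebraMap F F' aa * lam - algebraMap F F' cc * mu)
          * (algebraMap F F' bb * lam - algebraMap F F' dd * mu)
        - algebraMap F F' ff * algebraMap F F' ee'
          * (algebraMap F F' aa * lam - algebraMap F F' dd * mu)
          * (algebraMap F F' bb * lam - algebraMap F F' cc * mu)) = 0 := by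
    linear_combination
      (algebraMap F F' ff' * ν₂ * (algebraMap F F' bb * lam - algebraMap F F' dd * mu)) * G₁
      - (algebraMap F F' ff * ν₂ * (algebraMap F F' bb * lam - algebraMap F F' cc * mu)) * G₂
  have hEq : algebraMap F F' ee * algebraMap F F' ff'
          * (algebraMap F F' aa * lam - algebraMap F F' cc * mu)
          * (algebraMap F F' bb * lam - algebraMap F F' dd * mu)
        = algebraMap F F' ff * algebraMap F F' ee'
          * (algebraMap F F' aa * lam - algebraMap F F' dd * mu)
          * (algebraMap F F' bb * lam - algebraMap F F' cc * mu) :=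
    sub_eq_zero.mp ((mul_eq_zero.mp hEν).resolve_left (mul_ne_zero hν₁ hν₂))
  have hmu2 : mu = α * lam := by rw [hαdef]; field_simp
  rw [hmu2] at hEq
  -- the quadratic equation for α over F
  have hlam2 : lam ^ 2 *
      (algebraMap F F' (cc * dd * (ee * ff' - ff * ee')) * α ^ 2
        + algebraMap F F' (ff * ee' * (aa * cc + bb * dd) - ee * ff' * (aa * dd + bb * cc)) * α
        + algebraMap F F' (aa * bb * (ee * ff' - ff * ee'))) = 0 := by
    simp only [map_mul, map_sub, map_add]
    linear_combination hEq
  have hquad : algebraMap F F' (cc * dd * (ee * ff' - ff * ee')) * α ^ 2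
        + algebraMap F F' (ff * ee' * (aa * cc + bb * dd) - ee * ff' * (aa * dd + bb * cc)) * α
        + algebraMap F F' (aa * bb * (ee * ff' - ff * ee')) = 0 :=
    (mul_eq_zero.mp hlam2).resolve_left (pow_ne_zero 2 hlam)
  by_cases hdisc : ee * ff' - ff * ee' = 0
  · exfalso
    have hz2 : algebraMap F F' (cc * dd * (ee * ff' - ff * ee')) = 0 := by
      rw [hdisc, mul_zero, map_zero]
    have hz0 : algebraMap F F' (aa * bb * (ee * ff' - ff * ee')) = 0 := by
      rw [hdisc, mul_zero, map_zero]
    rw [hz2, hz0, zero_mul, zero_add, add_zero] at hquad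
    have hc₁ : ff * ee' * (aa * cc + bb * dd) - ee * ff' * (aa * dd + bb * cc) = 0 :=
      (_root_.map_eq_zero _).mp ((mul_eq_zero.mp hquad).resolve_right hα0)
    have hkey : ff * ee' * ((aa - bb) * (cc - dd)) = 0 := by
      linear_combination hc₁ + (aa * dd + bb * cc) * hdisc
    exact (mul_ne_zero (mul_ne_zero hf0 he'0)
      (mul_ne_zero (sub_ne_zero.mpr hab) (sub_ne_zero.mpr hcd))) hkey
  · -- genuine quadratic: α has degree 2 over F
    have hc₂ : cc * dd * (ee * ff' - ff * ee') ≠ 0 :=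
      mul_ne_zero (mul_ne_zero hc0 hd0) hdisc
    set Pq : Polynomial F :=
      Polynomial.C (cc * dd * (ee * ff' - ff * ee')) * Polynomial.X ^ 2
        + Polynomial.C (ff * ee' * (aa * cc + bb * dd) - ee * ff' * (aa * dd + bb * cc))
          * Polynomial.X
        + Polynomial.C (aa * bb * (ee * ff' - ff * ee')) with hPqdef
    have hcoeff : Pq.coeff 2 = cc * dd * (ee * ff' - ff * ee') := by
      rw [hPqdef]
      simp only [Polynomial.coeff_add, Polynomial.coeff_C_mul, Polynomial.coeff_X_pow,
        Polynomial.coeff_C, Polynomial.coeff_X]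
      norm_num
    have hPq0 : Pq ≠ 0 := by
      intro h
      apply hc₂
      rw [← hcoeff, h, Polynomial.coeff_zero]
    have hPqdeg : Pq.natDegree ≤ 2 := by
      rw [hPqdef]
      exact Polynomial.natDegree_quadratic_le
    have haev : Polynomial.aeval α Pq = 0 := by
      rw [hPqdef]
      simp only [map_add, map_mul, map_sub, map_pow, Polynomial.aeval_C,
        Polynomial.aeval_X] at hquad ⊢
      linear_combination hquad
    have hint : IsIntegral F α := IsIntegral.of_finite F α
    have hmp2 : (minpoly F α).natDegree = 2 :=
      le_antisymm ((Polynomial.natDegree_le_of_dvd (minpoly.dvd F α haev) hPq0).trans hPqdeg)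
        ((minpoly.two_le_natDegree_iff hint).mpr hαF)
    have hfr : finrank F F⟮α⟯ = 2 := by
      rw [IntermediateField.adjoin.finrank hint, hmp2]
    rw [← hdeg, ← Module.finrank_mul_finrank F F⟮α⟯ F', hfr]
    exact even_two_mul _
end

section
/- If direction: Let m ≥ 2 be even and q ≥ 3 a prime power. Then there exist three distinct F_q-sublines of PG(1,q^2) (embedded in PG(1,q^m)) that pairwise intersect in exactly 2 points and have no common point. -/
open Module

open HP

def mob (F' : Type*) [Field F'] (a b c d : F') (h : a * d - b * c ≠ 0) :
    (Fin 2 → F') ≃ₗ[F'] (Fin 2 → F') where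
  toFun w := ![a * w 0 + b * w 1, c * w 0 + d * w 1]
  invFun w := ![(d * w 0 - b * w 1) / (a * d - b * c), (a * w 1 - c * w 0) / (a * d - b * c)]
  map_add' x y := by
    funext i; fin_cases i <;> simp [Matrix.cons_val_zero, Matrix.cons_val_one] <;> ring
  map_smul' r x := by
    funext i; fin_cases i <;> simp [Matrix.cons_val_zero, Matrix.cons_val_one] <;> ring
  left_inv x := by
    funext i; fin_cases i <;>
      (simp only [Fin.zero_eta, Fin.mk_one, Matrix.cons_val_zero, Matrix.cons_val_one, Matrix.head_cons]; rw [div_eq_iff h]; ring)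
  right_inv x := by
    funext i; fin_cases i <;>
      (simp only [Fin.zero_eta, Fin.mk_one, Matrix.cons_val_zero, Matrix.cons_val_one, Matrix.head_cons]; rw [mul_div_assoc', mul_div_assoc', ← add_div, div_eq_iff h]; ring)

lemma mob_apply (F' : Type*) [Field F'] (a b c d : F') (h : a * d - b * c ≠ 0)
    (w : Fin 2 → F') :
    mob F' a b c d h w = ![a * w 0 + b * w 1, c * w 0 + d * w 1] := rfl

-- Step 1a: alpha with alpha^(q^2)=alpha, alpha not in image of F
lemma step1a (F F' : Type*) [Field F] [Fintype F] [Field F'] [Fintype F'] [Algebra F F']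
    (m : ℕ) (hm : 2 ≤ m) (hmeven : Even m) (hdeg : finrank F F' = m)
    (hq : 3 ≤ Fintype.card F) :
    ∃ α : F', (∀ a : F, algebraMap F F' a ≠ α) ∧ α ^ (Fintype.card F ^ 2) = α := by
  classical
  set q := Fintype.card F with hqdef
  obtain ⟨g, hg⟩ := IsCyclic.exists_generator (α := F'ˣ)
  have hcard' : Fintype.card F' = q ^ m := by
    rw [← hdeg]; exact card_eq_pow_finrank
  have horder : orderOf g = q ^ m - 1 := by
    rw [orderOf_eq_card_of_forall_mem_zpowers hg, Nat.card_eq_fintype_card, Fintype.card_units, hcard']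
  set n := q ^ m - 1 with hn
  set d := q ^ 2 - 1 with hd
  have hq1 : 1 < q := lt_of_lt_of_le (by norm_num) hq
  have hdn : d ∣ n := by
    obtain ⟨k, hk⟩ := hmeven
    have : q ^ m = (q ^ 2) ^ k := by rw [← pow_mul]; congr 1; omega
    rw [hn, hd, this]
    simpa using Nat.sub_dvd_pow_sub_pow (q ^ 2) 1 k
  have hn0 : n ≠ 0 := by
    have : 1 < q ^ m := Nat.one_lt_pow (by omega) hq1
    omega
  have hd0 : 0 < d := by
    have : 1 < q ^ 2 := Nat.one_lt_pow (by omega) hq1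
    omega
  set u := g ^ (n / d) with hu
  have hgcd : Nat.gcd n (n / d) = n / d := Nat.gcd_eq_right (Nat.div_dvd_of_dvd hdn)
  have horderu : orderOf u = d := by
    rw [hu, orderOf_pow, horder, hgcd, Nat.div_div_self hdn hn0]
  refine ⟨(u : F'), ?_, ?_⟩
  · intro a ha
    have hα0 : (u : F') ≠ 0 := Units.ne_zero u
    have haq : (u : F') ^ q = (u : F') := by
      rw [← ha, ← map_pow, FiniteField.pow_card]
    have hpow : u ^ (q - 1) = 1 := by
      ext
      push_cast
      have : (u : F') ^ (q - 1) * (u : F') = (u:F') := by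
        rw [← pow_succ]
        have : q - 1 + 1 = q := by omega
        rw [this, haq]
      field_simp at this
      simpa using this
    have hdvd : orderOf u ∣ q - 1 := orderOf_dvd_of_pow_eq_one hpow
    rw [horderu] at hdvd
    have hle : d ≤ q - 1 := Nat.le_of_dvd (by omega) hdvd
    have hq2 : q ^ 2 = q * q := sq q
    have : 2 * q ≤ q * q := Nat.mul_le_mul_right q (by omega)
    omega
  · have h1 : u ^ d = 1 := by rw [← horderu]; exact pow_orderOf_eq_one u
    have h1' : (u : F') ^ d = 1 := by
      rw [← Units.val_pow_eq_pow_val, h1, Units.val_one]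
    have : q ^ 2 = d + 1 := by
      have : 1 < q ^ 2 := Nat.one_lt_pow (by omega) hq1
      omega
    rw [this, pow_succ, h1', one_mul]

open Polynomial in
lemma step1b (F F' : Type*) [Field F] [Fintype F] [Field F'] [Fintype F'] [Algebra F F']
    (α : F') (hα : ∀ a : F, algebraMap F F' a ≠ α) (hα2 : α ^ (Fintype.card F ^ 2) = α) :
    ∃ s t : F, α ^ 2 = algebraMap F F' t * α + algebraMap F F' s := by
  classical
  set q := Fintype.card F with hqdef
  set A := algebraMap F F' with hA
  have hq1 : 1 < q := Fintype.one_lt_card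
  -- characteristic facts
  obtain ⟨p, hpc⟩ := CharP.exists F
  haveI := hpc
  obtain ⟨e, hp, hcard⟩ := FiniteField.card F p
  haveI : CharP F' p := charP_of_injective_algebraMap (algebraMap F F').injective p
  haveI : Fact p.Prime := ⟨hp⟩
  -- the q^2-power map is a ring hom
  have hq2 : q ^ 2 = p ^ (2 * (e : ℕ)) := by
    rw [hqdef, hcard, ← pow_mul, Nat.mul_comm]
  have hadd : ∀ x y : F', (x + y) ^ q ^ 2 = x ^ q ^ 2 + y ^ q ^ 2 := by
    intro x y; rw [hq2]; exact add_pow_char_pow x y p (2 * (e : ℕ))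
  have hAfix : ∀ a : F, (A a) ^ q ^ 2 = A a := by
    intro a
    rw [← map_pow, sq, pow_mul, FiniteField.pow_card, FiniteField.pow_card]
  -- the fixed set
  set K : Finset F' := Finset.univ.filter (fun x => x ^ q ^ 2 = x) with hK
  have hKcard : K.card ≤ q ^ 2 := by
    have hne : (X ^ q ^ 2 - X : F'[X]) ≠ 0 :=
      FiniteField.X_pow_card_sub_X_ne_zero F' (Nat.one_lt_pow (by norm_num) hq1)
    have hdeg : (X ^ q ^ 2 - X : F'[X]).natDegree = q ^ 2 :=
      FiniteField.X_pow_card_sub_X_natDegree_eq F' (Nat.one_lt_pow (by norm_num) hq1)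
    have hsub : K ⊆ (X ^ q ^ 2 - X : F'[X]).roots.toFinset := by
      intro x hx
      rw [Multiset.mem_toFinset, mem_roots hne]
      simp only [hK, Finset.mem_filter] at hx
      simp [IsRoot, hx.2]
    calc K.card ≤ _ := Finset.card_le_card hsub
      _ ≤ Multiset.card (X ^ q ^ 2 - X : F'[X]).roots := Multiset.toFinset_card_le _
      _ ≤ (X ^ q ^ 2 - X : F'[X]).natDegree := card_roots' _
      _ = q ^ 2 := hdeg
  -- image of (s,t) ↦ A s + A t * α
  set f : F × F → F' := fun st => A st.1 + A st.2 * α with hf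
  have hfinj : Function.Injective f := by
    rintro ⟨s, t⟩ ⟨s', t'⟩ hst
    simp only [hf] at hst
    have ht : t = t' := by
      by_contra hne
      have h1 : A (t - t') ≠ 0 := by
        intro h
        exact hne (sub_eq_zero.mp ((algebraMap F F').injective (by rw [show algebraMap F F' (t - t') = A (t-t') from rfl, h, map_zero])))
      have key : A (t - t') * α = A (s' - s) := by
        rw [map_sub, map_sub]; linear_combination hst
      apply hα ((s' - s) / (t - t'))
      show A ((s' - s) / (t - t')) = α
      rw [map_div₀, ← key]
      exact mul_div_cancel_left₀ α h1
    subst ht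
    have : A s = A s' := by linear_combination hst
    have hs : s = s' := (algebraMap F F').injective this
    simp [hs]
  have hfmem : ∀ st : F × F, f st ∈ K := by
    rintro ⟨s, t⟩
    simp only [hK, Finset.mem_filter, Finset.mem_univ, true_and, hf]
    rw [hadd, hAfix, mul_pow, hAfix, hα2]
  have himg : Finset.univ.image f = K := by
    apply Finset.eq_of_subset_of_card_le
    · intro x hx
      obtain ⟨st, _, rfl⟩ := Finset.mem_image.mp hx
      exact hfmem st
    · calc K.card ≤ q ^ 2 := hKcard
        _ = (Finset.univ.image f).card := by
            rw [Finset.card_image_of_injective _ hfinj, Finset.card_univ, Fintype.card_prod, sq]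
  have hα2mem : α ^ 2 ∈ K := by
    simp only [hK, Finset.mem_filter, Finset.mem_univ, true_and]
    rw [← pow_mul, mul_comm 2 (q^2), pow_mul, hα2]
  rw [← himg, Finset.mem_image] at hα2mem
  obtain ⟨⟨s, t⟩, _, hst⟩ := hα2mem
  exact ⟨s, t, by rw [← hst]; simp [hf]; ring⟩

lemma sne0 (F F' : Type*) [Field F] [Field F'] [Algebra F F']
    (α : F') (s t : F) (hα : ∀ a : F, algebraMap F F' a ≠ α)
    (h2 : α ^ 2 = algebraMap F F' t * α + algebraMap F F' s) : s ≠ 0 := by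
  intro hs
  subst hs
  have : α * (α - algebraMap F F' t) = 0 := by
    rw [map_zero] at h2; linear_combination h2
  rcases mul_eq_zero.mp this with h | h
  · exact hα 0 (by rw [map_zero, h])
  · exact hα t (by linear_combination -h)

lemma exists_alpha (F F' : Type*) [Field F] [Fintype F] [Field F'] [Fintype F'] [Algebra F F']
    (m : ℕ) (hm : 2 ≤ m) (hmeven : Even m) (hdeg : finrank F F' = m)
    (hq : 3 ≤ Fintype.card F) :
    ∃ (α : F') (s t e : F), (∀ a : F, algebraMap F F' a ≠ α) ∧
      α ^ 2 = algebraMap F F' t * α + algebraMap F F' s ∧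
      s ≠ 0 ∧ e ≠ 0 ∧ e ≠ 1 ∧ e ≠ -s := by
  classical
  obtain ⟨α₀, hα₀, hfix⟩ := step1a F F' m hm hmeven hdeg hq
  obtain ⟨s₀, t₀, h2₀⟩ := step1b F F' α₀ hα₀ hfix
  obtain ⟨p, hpc⟩ := CharP.exists F
  haveI := hpc
  obtain ⟨e', hp, hcard⟩ := FiniteField.card F p
  by_cases hp2 : p = 2
  · -- char 2: card F = 2^e' ≥ 4, any e outside {0,1,-s₀} works
    have hq4 : 4 ≤ Fintype.card F := by
      subst hp2
      rcases Nat.lt_or_ge (e' : ℕ) 2 with h | h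
      · exfalso
        have : (2:ℕ) ^ (e' : ℕ) ≤ 2 ^ 1 := Nat.pow_le_pow_right (by norm_num) (by omega)
        omega
      · have : (2:ℕ) ^ 2 ≤ 2 ^ (e' : ℕ) := Nat.pow_le_pow_right (by norm_num) h
        omega
    have hex : ∃ e : F, e ≠ 0 ∧ e ≠ 1 ∧ e ≠ -s₀ := by
      by_contra hcon
      push_neg at hcon
      have hsub : (Finset.univ : Finset F) ⊆ {0, 1, -s₀} := by
        intro x _
        simp only [Finset.mem_insert, Finset.mem_singleton]
        by_cases hx0 : x = 0
        · exact Or.inl hx0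
        by_cases hx1 : x = 1
        · exact Or.inr (Or.inl hx1)
        exact Or.inr (Or.inr (hcon x hx0 hx1))
      have hle : Fintype.card F ≤ 3 := by
        calc Fintype.card F = (Finset.univ : Finset F).card := (Finset.card_univ).symm
          _ ≤ ({0, 1, -s₀} : Finset F).card := Finset.card_le_card hsub
          _ ≤ 3 := by
            apply le_trans (Finset.card_insert_le _ _)
            have h1 := Finset.card_insert_le (1:F) ({-s₀} : Finset F)
            simp only [Finset.card_singleton] at h1
            omega
      omega
    obtain ⟨e, he0, he1, hes⟩ := hex
    exact ⟨α₀, s₀, t₀, e, hα₀, h2₀, sne0 F F' α₀ s₀ t₀ hα₀ h2₀, he0, he1, hes⟩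
  · -- odd char: complete the square
    have h2ne : (2 : F) ≠ 0 := by
      intro h
      have hdvd : p ∣ 2 := (CharP.cast_eq_zero_iff F p 2).mp (by exact_mod_cast h)
      exact hp2 ((Nat.prime_dvd_prime_iff_eq hp Nat.prime_two).mp hdvd)
    have h2ne' : (2:F') ≠ 0 := by
      intro h
      apply h2ne
      apply (algebraMap F F').injective
      rw [map_zero, map_ofNat]
      exact h
    set α := α₀ - algebraMap F F' (t₀ / 2) with hαdef
    have hαnot : ∀ a : F, algebraMap F F' a ≠ α := by
      intro a ha
      apply hα₀ (a + t₀ / 2)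
      rw [map_add]
      rw [hαdef] at ha
      linear_combination ha
    set s₁ := s₀ + t₀ * t₀ / 4 with hs₁
    have h2 : α ^ 2 = algebraMap F F' 0 * α + algebraMap F F' s₁ := by
      rw [map_zero, zero_mul, zero_add, hs₁, map_add, map_div₀, map_mul, hαdef, map_div₀]
      rw [show (algebraMap F F') 4 = (4:F') from map_ofNat _ 4,
          show (algebraMap F F') 2 = (2:F') from map_ofNat _ 2]
      have h4ne : (4:F') ≠ 0 := by
        have : (4:F') = 2 * 2 := by norm_num
        rw [this]; exact mul_ne_zero h2ne' h2ne'
      field_simp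
      linear_combination 16 * h2₀
    have hex : ∃ e : F, e ≠ 0 ∧ e ≠ 1 ∧ e ≠ -s₁ := by
      by_contra hcon
      push_neg at hcon
      have hm10 : (-1 : F) ≠ 0 := neg_ne_zero.mpr one_ne_zero
      have hm11 : (-1 : F) ≠ 1 := by
        intro h; apply h2ne; linear_combination -h
      have hs1 : s₁ = 1 := by
        have := hcon (-1) hm10 hm11
        linear_combination this
      have hfact : (α - 1) * (α + 1) = 0 := by
        have : α ^ 2 = 1 := by
          rw [h2, hs1, map_zero, zero_mul, zero_add, map_one]
        linear_combination this
      rcases mul_eq_zero.mp hfact with h | h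
      · exact hαnot 1 (by rw [map_one]; linear_combination -h)
      · exact hαnot (-1) (by rw [map_neg, map_one]; linear_combination -h)
    obtain ⟨e, he0, he1, hes⟩ := hex
    exact ⟨α, s₁, 0, e, hαnot, h2, sne0 F F' α s₁ 0 hαnot h2, he0, he1, hes⟩

lemma construction (F F' : Type*) [Field F] [Field F'] [Algebra F F']
    (α : F') (s t e : F) (hαA : ∀ a : F, algebraMap F F' a ≠ α)
    (hα2 : α ^ 2 = algebraMap F F' t * α + algebraMap F F' s)
    (hs0 : s ≠ 0) (he0 : e ≠ 0) (he1 : e ≠ 1) (hes : e ≠ -s) :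
    ∃ b₁ b₂ b₃ : Set (Projectivization F' (Fin 2 → F')),
      IsSubline F F' b₁ ∧ IsSubline F F' b₂ ∧ IsSubline F F' b₃ ∧
      b₁ ≠ b₂ ∧ b₁ ≠ b₃ ∧ b₂ ≠ b₃ ∧
      (b₁ ∩ b₂).ncard = 2 ∧ (b₁ ∩ b₃).ncard = 2 ∧ (b₂ ∩ b₃).ncard = 2 ∧
      b₁ ∩ b₂ ∩ b₃ = ∅ := by
  classical
  have hAinj : Function.Injective (algebraMap F F') := (algebraMap F F').injective
  have hα0 : α ≠ 0 := fun h => hαA 0 (by rw [map_zero]; exact h.symm)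
  have hα1 : α ≠ 1 := fun h => hαA 1 (by rw [map_one]; exact h.symm)
  have hαe : algebraMap F F' e - α ≠ 0 := sub_ne_zero.mpr (hαA e)
  have hα1' : α - 1 ≠ 0 := sub_ne_zero.mpr hα1
  have hee1 : (1 : F') - algebraMap F F' e ≠ 0 := by
    refine sub_ne_zero.mpr fun h => he1 (hAinj ?_)
    rw [map_one, ← h]
  have hee1' : algebraMap F F' e - 1 ≠ 0 := fun h => hee1 (by linear_combination -h)
  -- independence of 1, α over F
  have indep : ∀ a b : F, algebraMap F F' a = algebraMap F F' b * α → a = 0 ∧ b = 0 := by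
    intro a b h
    rcases eq_or_ne b 0 with hb | hb
    · subst hb
      rw [map_zero, zero_mul] at h
      exact ⟨hAinj (by rw [h, map_zero]), rfl⟩
    · exfalso
      apply hαA (a / b)
      rw [map_div₀, h]
      exact mul_div_cancel_left₀ α (fun hh => hb (hAinj (by rw [hh, map_zero])))
  have indep2 : ∀ a b c d : F,
      algebraMap F F' a + algebraMap F F' b * α = algebraMap F F' c + algebraMap F F' d * α →
      a = c ∧ b = d := by
    intro a b c d h
    have h' := indep (a - c) (d - b) (by rw [map_sub, map_sub]; linear_combination h)
    exact ⟨sub_eq_zero.mp h'.1, (sub_eq_zero.mp h'.2).symm⟩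
  -- the scalars w₂ and v₂
  set w₂ : F := -e / s with hw₂def
  have hsw₂ : s * w₂ = -e := by rw [hw₂def]; field_simp; try ring
  have hw₂0 : w₂ ≠ 0 := div_ne_zero (neg_ne_zero.mpr he0) hs0
  have hw₂1 : w₂ ≠ 1 := by
    intro h
    apply hes
    have : s * w₂ = s := by rw [h, mul_one]
    have := hsw₂ ▸ this
    linear_combination -this
  have hW0 : algebraMap F F' w₂ ≠ 0 := fun h => hw₂0 (hAinj (by rw [h, map_zero]))
  have hαW : α * algebraMap F F' w₂ ≠ algebraMap F F' e := by
    intro h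
    apply hαA (e / w₂)
    rw [map_div₀, ← h]
    field_simp
    try ring
  have hSW : algebraMap F F' s * algebraMap F F' w₂ = -algebraMap F F' e := by
    rw [← map_mul, hsw₂, map_neg]
  have hαWe : algebraMap F F' e - α * algebraMap F F' w₂ ≠ 0 :=
    sub_ne_zero.mpr fun h => hαW h.symm
  -- the denominator of v₂ is nonzero
  have hI1 : α * algebraMap F F' (e + w₂ * (1 - t)) =
      (α - 1) * (algebraMap F F' e - α * algebraMap F F' w₂) := by
    simp only [map_add, map_mul, map_sub, map_one]
    linear_combination algebraMap F F' w₂ * hα2 + hSW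
  have hden : e + w₂ * (1 - t) ≠ 0 := by
    intro h
    have h1 : α * algebraMap F F' (e + w₂ * (1 - t)) = 0 := by rw [h, map_zero, mul_zero]
    rw [hI1] at h1
    exact (mul_ne_zero hα1' hαWe) h1
  set v₂ : F := (w₂ * (e - t) + 1) / (e + w₂ * (1 - t)) with hv₂def
  have hv₂ : v₂ * (e + w₂ * (1 - t)) = w₂ * (e - t) + 1 := by
    rw [hv₂def]; field_simp
  have hv₂' : algebraMap F F' v₂ * (algebraMap F F' e + algebraMap F F' w₂ * (1 - algebraMap F F' t)) =
      algebraMap F F' w₂ * (algebraMap F F' e - algebraMap F F' t) + 1 := by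
    have := congrArg (algebraMap F F') hv₂
    simpa only [map_mul, map_add, map_sub, map_one] using this
  -- the three linear maps
  set ee : F' := algebraMap F F' e with heedef
  have hdet2 : α * 1 - 0 * 0 ≠ 0 := by simpa using hα0
  have hdet3 : (ee - α) * (α - 1) - (α - 1) * ee * (ee - α) ≠ 0 := by
    have hfac : (ee - α) * (α - 1) - (α - 1) * ee * (ee - α) =
        (ee - α) * ((α - 1) * (1 - ee)) := by ring
    rw [hfac]
    exact mul_ne_zero hαe (mul_ne_zero hα1' hee1)
  set g₁ := LinearEquiv.refl F' (Fin 2 → F') with hg₁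
  set g₂ := mob F' α 0 0 1 hdet2 with hg₂
  set g₃ := mob F' (ee - α) ((α - 1) * ee) (ee - α) (α - 1) hdet3 with hg₃
  set b₁ : Set (Projectivization F' (Fin 2 → F')) :=
    {P | ∃ (v : Fin 2 → F) (hv : g₁ (fun i => algebraMap F F' (v i)) ≠ 0),
      P = Projectivization.mk F' (g₁ (fun i => algebraMap F F' (v i))) hv} with hb₁
  set b₂ : Set (Projectivization F' (Fin 2 → F')) :=
    {P | ∃ (v : Fin 2 → F) (hv : g₂ (fun i => algebraMap F F' (v i)) ≠ 0),
      P = Projectivization.mk F' (g₂ (fun i => algebraMap F F' (v i))) hv} with hb₂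
  set b₃ : Set (Projectivization F' (Fin 2 → F')) :=
    {P | ∃ (v : Fin 2 → F) (hv : g₃ (fun i => algebraMap F F' (v i)) ≠ 0),
      P = Projectivization.mk F' (g₃ (fun i => algebraMap F F' (v i))) hv} with hb₃
  -- the six points
  have hnz10 : (![1, 0] : Fin 2 → F') ≠ 0 := by
    intro h; simpa using congrFun h 0
  have hnz01 : (![0, 1] : Fin 2 → F') ≠ 0 := by
    intro h; simpa using congrFun h 1
  have hnz11 : (![1, 1] : Fin 2 → F') ≠ 0 := by
    intro h; simpa using congrFun h 1
  have hnze1 : (![ee, 1] : Fin 2 → F') ≠ 0 := by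
    intro h; simpa using congrFun h 1
  have hnza1 : (![α, 1] : Fin 2 → F') ≠ 0 := by
    intro h; simpa using congrFun h 1
  have hnzw1 : (![α * algebraMap F F' w₂, 1] : Fin 2 → F') ≠ 0 := by
    intro h; simpa using congrFun h 1
  set P10 := Projectivization.mk F' ![1, 0] hnz10 with hP10
  set P01 := Projectivization.mk F' ![0, 1] hnz01 with hP01
  set P11 := Projectivization.mk F' ![1, 1] hnz11 with hP11
  set Pe1 := Projectivization.mk F' ![ee, 1] hnze1 with hPe1
  set Pa1 := Projectivization.mk F' ![α, 1] hnza1 with hPa1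
  set Pw1 := Projectivization.mk F' ![α * algebraMap F F' w₂, 1] hnzw1 with hPw1
  -- generic membership builder
  have memgen : ∀ (g : (Fin 2 → F') ≃ₗ[F'] (Fin 2 → F')) (x y : F')
      (hxy : (![x, y] : Fin 2 → F') ≠ 0) (v : Fin 2 → F) (c : F')
      (hc : c • (g fun i => algebraMap F F' (v i)) = ![x, y]),
      Projectivization.mk F' ![x, y] hxy ∈
        {P | ∃ (v : Fin 2 → F) (hv : g (fun i => algebraMap F F' (v i)) ≠ 0),
          P = Projectivization.mk F' (g (fun i => algebraMap F F' (v i))) hv} := by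
    intro g x y hxy v c hc
    have hgv : g (fun i => algebraMap F F' (v i)) ≠ 0 := by
      intro h
      rw [h, smul_zero] at hc
      exact hxy hc.symm
    exact ⟨v, hgv, (Projectivization.mk_eq_mk_iff' F' _ _ hxy hgv).mpr ⟨c, hc⟩⟩
  have hP10b₁ : P10 ∈ b₁ := by
    refine memgen g₁ 1 0 hnz10 ![1, 0] 1 ?_
    funext i; fin_cases i <;> simp [hg₁]
  have hP01b₁ : P01 ∈ b₁ := by
    refine memgen g₁ 0 1 hnz01 ![0, 1] 1 ?_
    funext i; fin_cases i <;> simp [hg₁]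
  have hP11b₁ : P11 ∈ b₁ := by
    refine memgen g₁ 1 1 hnz11 ![1, 1] 1 ?_
    funext i; fin_cases i <;> simp [hg₁]
  have hPe1b₁ : Pe1 ∈ b₁ := by
    refine memgen g₁ ee 1 hnze1 ![e, 1] 1 ?_
    funext i; fin_cases i <;> simp [hg₁, heedef]
  have hP10b₂ : P10 ∈ b₂ := by
    refine memgen g₂ 1 0 hnz10 ![1, 0] α⁻¹ ?_
    funext i; fin_cases i <;>
      simp [hg₂, mob_apply, Pi.smul_apply, smul_eq_mul, inv_mul_cancel₀ hα0]
  have hP01b₂ : P01 ∈ b₂ := by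
    refine memgen g₂ 0 1 hnz01 ![0, 1] 1 ?_
    funext i; fin_cases i <;> simp [hg₂, mob_apply]
  have hPa1b₂ : Pa1 ∈ b₂ := by
    refine memgen g₂ α 1 hnza1 ![1, 1] 1 ?_
    funext i; fin_cases i <;> simp [hg₂, mob_apply]
  have hPw1b₂ : Pw1 ∈ b₂ := by
    refine memgen g₂ (α * algebraMap F F' w₂) 1 hnzw1 ![w₂, 1] 1 ?_
    funext i; fin_cases i <;> simp [hg₂, mob_apply]
  have hP11b₃ : P11 ∈ b₃ := by
    refine memgen g₃ 1 1 hnz11 ![1, 0] (ee - α)⁻¹ ?_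
    funext i; fin_cases i <;>
      simp [hg₃, mob_apply, Pi.smul_apply, smul_eq_mul, inv_mul_cancel₀ hαe, heedef] <;>
      exact inv_mul_cancel₀ hαe
  have hPe1b₃ : Pe1 ∈ b₃ := by
    refine memgen g₃ ee 1 hnze1 ![0, 1] (α - 1)⁻¹ ?_
    funext i; fin_cases i <;>
      (simp [hg₃, mob_apply, Pi.smul_apply, smul_eq_mul]; field_simp; try ring)
  have hPa1b₃ : Pa1 ∈ b₃ := by
    refine memgen g₃ α 1 hnza1 ![1, 1] (ee - 1)⁻¹ ?_
    funext i; fin_cases i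
    · simp [hg₃, mob_apply, Pi.smul_apply, smul_eq_mul, heedef]
      rw [inv_mul_eq_iff_eq_mul₀ (show algebraMap F F' e - 1 ≠ 0 from hee1')]; ring
    · (simp [hg₃, mob_apply, Pi.smul_apply, smul_eq_mul, heedef]; field_simp
       exact div_self (show algebraMap F F' e - 1 ≠ 0 from hee1'))
  -- the key identity for Pw1 ∈ b₃
  have hIdent : (ee - α) + algebraMap F F' v₂ * ((α - 1) * ee) =
      α * algebraMap F F' w₂ * ((ee - α) + algebraMap F F' v₂ * (α - 1)) := by
    rw [heedef]
    linear_combination (algebraMap F F' w₂ - algebraMap F F' v₂ * algebraMap F F' w₂) * hα2 +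
      (1 - algebraMap F F' v₂) * hSW + α * hv₂'
  have hdd : (ee - α) + algebraMap F F' v₂ * (α - 1) ≠ 0 := by
    intro h
    have h2' : (ee - α) + algebraMap F F' v₂ * ((α - 1) * ee) = 0 := by
      rw [hIdent, h, mul_zero]
    have h3 : algebraMap F F' v₂ * ((α - 1) * (ee - 1)) = 0 := by
      linear_combination h2' - h
    rcases mul_eq_zero.mp h3 with h4 | h4
    · rw [h4, zero_mul, add_zero] at h
      exact hαe h
    · rcases mul_eq_zero.mp h4 with h5 | h5
      · exact hα1' h5
      · exact hee1' h5
  have hPw1b₃ : Pw1 ∈ b₃ := by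
    refine memgen g₃ (α * algebraMap F F' w₂) 1 hnzw1 ![1, v₂]
      ((ee - α) + algebraMap F F' v₂ * (α - 1))⁻¹ ?_
    funext i; fin_cases i <;>
      simp only [hg₃, mob_apply, Pi.smul_apply, smul_eq_mul, Fin.zero_eta, Fin.mk_one,
        Matrix.cons_val_zero, Matrix.cons_val_one, Matrix.head_cons, map_one, map_zero,
        mul_one, one_mul]
    · rw [inv_mul_eq_iff_eq_mul₀ hdd]
      linear_combination hIdent
    · rw [inv_mul_eq_iff_eq_mul₀ hdd]
      ring
  -- nonzero vector helper
  have hvecnz : ∀ (u : Fin 2 → F), u 0 = 0 → u 1 = 0 → (fun i => algebraMap F F' (u i)) = (0 : Fin 2 → F') := by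
    intro u h0 h1
    funext i; fin_cases i <;> simp [h0, h1]
  -- nondegeneracy of the second row of g₃
  have heltgen : ∀ u : Fin 2 → F, g₃ (fun i => algebraMap F F' (u i)) ≠ 0 →
      (ee - α) * algebraMap F F' (u 0) + (α - 1) * algebraMap F F' (u 1) ≠ 0 := by
    intro u hu h
    have key : algebraMap F F' (e * u 0 - u 1) = algebraMap F F' (u 0 - u 1) * α := by
      simp only [map_sub, map_mul, ← heedef]
      linear_combination h
    obtain ⟨h1', h2'⟩ := indep _ _ key
    have hu0 : u 0 = 0 := by
      have h3 : u 0 * (e - 1) = 0 := by linear_combination h1' - h2'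
      rcases mul_eq_zero.mp h3 with h' | h'
      · exact h'
      · exact absurd h' (sub_ne_zero.mpr he1)
    have hu1 : u 1 = 0 := by linear_combination hu0 - h2'
    apply hu
    rw [hvecnz u hu0 hu1, map_zero]
  -- forward inclusion b₁ ∩ b₂
  have hsub12 : b₁ ∩ b₂ ⊆ {P10, P01} := by
    rintro P ⟨⟨v, hv, rfl⟩, ⟨u, hu, hPu⟩⟩
    obtain ⟨c, hc⟩ := (Projectivization.mk_eq_mk_iff' F' _ _ hv hu).mp hPu
    have hc0 : c ≠ 0 := by
      intro h; rw [h, zero_smul] at hc; exact hv hc.symm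
    have h0 := congrFun hc 0
    have h1 := congrFun hc 1
    simp only [hg₁, hg₂, mob_apply, LinearEquiv.refl_apply, Pi.smul_apply, smul_eq_mul,
      Matrix.cons_val_zero, Matrix.cons_val_one, Matrix.head_cons, zero_mul, mul_zero,
      one_mul, mul_one, add_zero, zero_add] at h0 h1
    simp only [Set.mem_insert_iff, Set.mem_singleton_iff]
    rcases eq_or_ne (u 1) 0 with hu1 | hu1
    · have hv1 : v 1 = 0 := by
        apply hAinj
        rw [map_zero]
        rw [hu1, map_zero, mul_zero] at h1
        linear_combination -h1
      left
      refine (Projectivization.mk_eq_mk_iff' F' _ _ hv hnz10).mpr ⟨algebraMap F F' (v 0), ?_⟩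
      funext i; fin_cases i <;>
        simp [hg₁, hv1]
    · have hb : v 1 ≠ 0 := by
        intro h
        rw [h, map_zero] at h1
        rcases mul_eq_zero.mp h1 with h' | h'
        · exact hc0 h'
        · exact hu1 (hAinj (by rw [h', map_zero]))
      have key : algebraMap F F' (v 0 * u 1) = algebraMap F F' (u 0 * v 1) * α := by
        simp only [map_mul]
        linear_combination α * algebraMap F F' (u 0) * h1 - algebraMap F F' (u 1) * h0
      obtain ⟨hres1, hres2⟩ := indep _ _ key
      have hv0 : v 0 = 0 := by
        rcases mul_eq_zero.mp hres1 with h' | h'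
        · exact h'
        · exact absurd h' hu1
      right
      refine (Projectivization.mk_eq_mk_iff' F' _ _ hv hnz01).mpr ⟨algebraMap F F' (v 1), ?_⟩
      funext i; fin_cases i <;>
        simp [hg₁, hv0]
  -- forward inclusion b₁ ∩ b₃
  have hsub13 : b₁ ∩ b₃ ⊆ {P11, Pe1} := by
    rintro P ⟨⟨v, hv, rfl⟩, ⟨u, hu, hPu⟩⟩
    obtain ⟨c, hc⟩ := (Projectivization.mk_eq_mk_iff' F' _ _ hv hu).mp hPu
    have hc0 : c ≠ 0 := by
      intro h; rw [h, zero_smul] at hc; exact hv hc.symm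
    have h0 := congrFun hc 0
    have h1 := congrFun hc 1
    simp only [hg₁, hg₃, mob_apply, LinearEquiv.refl_apply, Pi.smul_apply, smul_eq_mul,
      Matrix.cons_val_zero, Matrix.cons_val_one, Matrix.head_cons, zero_mul, mul_zero,
      one_mul, mul_one, add_zero, zero_add] at h0 h1
    have helt := heltgen u hu
    have hb : v 1 ≠ 0 := by
      intro h
      rw [h, map_zero] at h1
      rcases mul_eq_zero.mp h1 with h' | h'
      · exact hc0 h'
      · exact helt h'
    have key : algebraMap F F' (v 1) * ((ee - α) * algebraMap F F' (u 0) + (α - 1) * ee * algebraMap F F' (u 1)) =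
        algebraMap F F' (v 0) * ((ee - α) * algebraMap F F' (u 0) + (α - 1) * algebraMap F F' (u 1)) := by
      linear_combination ((ee - α) * algebraMap F F' (u 0) + (α - 1) * algebraMap F F' (u 1)) * h0 -
        ((ee - α) * algebraMap F F' (u 0) + (α - 1) * ee * algebraMap F F' (u 1)) * h1
    have key2 : algebraMap F F' (v 1 * (u 0 - u 1) * e) + algebraMap F F' (v 1 * (u 1 * e - u 0)) * α =
        algebraMap F F' (v 0 * (u 0 * e - u 1)) + algebraMap F F' (v 0 * (u 1 - u 0)) * α := by
      simp only [map_mul, map_sub, map_add, ← heedef]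
      linear_combination key
    obtain ⟨F1, F2⟩ := indep2 _ _ _ _ key2
    simp only [Set.mem_insert_iff, Set.mem_singleton_iff]
    rcases eq_or_ne (u 1) 0 with hu1 | hu1
    · have hu0 : u 0 ≠ 0 := by
        intro h'
        apply hu
        rw [hvecnz u h' hu1, map_zero]
      have hab : v 0 = v 1 := by
        rw [hu1] at F2
        have h3 : (v 0 - v 1) * u 0 = 0 := by linear_combination F2
        rcases mul_eq_zero.mp h3 with h' | h'
        · exact sub_eq_zero.mp h'
        · exact absurd h' hu0
      left
      refine (Projectivization.mk_eq_mk_iff' F' _ _ hv hnz11).mpr ⟨algebraMap F F' (v 1), ?_⟩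
      funext i; fin_cases i <;>
        simp [hg₁, hab]
    · rcases eq_or_ne (u 0) 0 with hu0 | hu0
      · have hab : v 0 = v 1 * e := by
          rw [hu0] at F1
          have h3 : (v 0 - v 1 * e) * u 1 = 0 := by linear_combination F1
          rcases mul_eq_zero.mp h3 with h' | h'
          · exact sub_eq_zero.mp h'
          · exact absurd h' hu1
        right
        refine (Projectivization.mk_eq_mk_iff' F' _ _ hv hnze1).mpr ⟨algebraMap F F' (v 1), ?_⟩
        funext i; fin_cases i <;>
          simp [hg₁, hab, heedef, map_mul, mul_comm]
      · exfalso
        have h3 : v 1 * (u 0 * u 1 * (e - 1) ^ 2) = 0 := by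
          linear_combination (u 0 - u 1) * F1 + (u 0 * e - u 1) * F2
        rcases mul_eq_zero.mp h3 with h' | h'
        · exact hb h'
        · rcases mul_eq_zero.mp h' with h'' | h''
          · rcases mul_eq_zero.mp h'' with h3' | h3'
            · exact hu0 h3'
            · exact hu1 h3'
          · exact (pow_ne_zero 2 (sub_ne_zero.mpr he1)) h''
  -- forward inclusion b₂ ∩ b₃
  have hsub23 : b₂ ∩ b₃ ⊆ {Pa1, Pw1} := by
    rintro P ⟨⟨v, hv, rfl⟩, ⟨u, hu, hPu⟩⟩
    obtain ⟨c, hc⟩ := (Projectivization.mk_eq_mk_iff' F' _ _ hv hu).mp hPu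
    have hc0 : c ≠ 0 := by
      intro h; rw [h, zero_smul] at hc; exact hv hc.symm
    have h0 := congrFun hc 0
    have h1 := congrFun hc 1
    simp only [hg₂, hg₃, mob_apply, Pi.smul_apply, smul_eq_mul,
      Matrix.cons_val_zero, Matrix.cons_val_one, Matrix.head_cons, zero_mul, mul_zero,
      one_mul, mul_one, add_zero, zero_add] at h0 h1
    have helt := heltgen u hu
    have hb : v 1 ≠ 0 := by
      intro h
      rw [h, map_zero] at h1
      rcases mul_eq_zero.mp h1 with h' | h'
      · exact hc0 h'
      · exact helt h'
    have key : algebraMap F F' (v 1) * ((ee - α) * algebraMap F F' (u 0) + (α - 1) * ee * algebraMap F F' (u 1)) =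
        α * algebraMap F F' (v 0) * ((ee - α) * algebraMap F F' (u 0) + (α - 1) * algebraMap F F' (u 1)) := by
      linear_combination ((ee - α) * algebraMap F F' (u 0) + (α - 1) * algebraMap F F' (u 1)) * h0 -
        ((ee - α) * algebraMap F F' (u 0) + (α - 1) * ee * algebraMap F F' (u 1)) * h1
    have key2 : algebraMap F F' (v 1 * (u 0 - u 1) * e) + algebraMap F F' (v 1 * (u 1 * e - u 0)) * α =
        algebraMap F F' (v 0 * (u 1 - u 0) * s) + algebraMap F F' (v 0 * (u 0 * e - (u 0 - u 1) * t - u 1)) * α := by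
      simp only [map_mul, map_sub, map_add, ← heedef]
      linear_combination key + algebraMap F F' (v 0) *
        (algebraMap F F' (u 1) - algebraMap F F' (u 0)) * hα2
    obtain ⟨F1, F2⟩ := indep2 _ _ _ _ key2
    simp only [Set.mem_insert_iff, Set.mem_singleton_iff]
    rcases eq_or_ne (u 0) (u 1) with huv | huv
    · have hu0 : u 0 ≠ 0 := by
        intro h'
        apply hu
        rw [hvecnz u h' (huv ▸ h'), map_zero]
      have hab : v 0 = v 1 := by
        rw [← huv] at F2
        have h3 : (v 0 - v 1) * (u 0 * (e - 1)) = 0 := by linear_combination -F2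
        rcases mul_eq_zero.mp h3 with h' | h'
        · exact sub_eq_zero.mp h'
        · rcases mul_eq_zero.mp h' with h'' | h''
          · exact absurd h'' hu0
          · exact absurd h'' (sub_ne_zero.mpr he1)
      left
      refine (Projectivization.mk_eq_mk_iff' F' _ _ hv hnza1).mpr ⟨algebraMap F F' (v 1), ?_⟩
      funext i; fin_cases i <;>
        (simp [hg₂, mob_apply, hab]; try ring)
    · have hvs : v 1 * e + v 0 * s = 0 := by
        have h3 : (u 0 - u 1) * (v 1 * e + v 0 * s) = 0 := by linear_combination F1
        rcases mul_eq_zero.mp h3 with h' | h'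
        · exact absurd (sub_eq_zero.mp h') huv
        · exact h'
      have hab : v 0 = w₂ * v 1 := by
        rw [hw₂def]
        field_simp
        linear_combination hvs
      right
      refine (Projectivization.mk_eq_mk_iff' F' _ _ hv hnzw1).mpr ⟨algebraMap F F' (v 1), ?_⟩
      funext i; fin_cases i <;>
        (simp [hg₂, mob_apply, hab, map_mul]; try ring)
  -- pairwise distinctness of points
  have hne : ∀ (x y x' y' : F') (h1 : (![x, y] : Fin 2 → F') ≠ 0)
      (h2 : (![x', y'] : Fin 2 → F') ≠ 0),
      (∀ c : F', c * x' = x → c * y' = y → False) →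
      Projectivization.mk F' ![x, y] h1 ≠ Projectivization.mk F' ![x', y'] h2 := by
    intro x y x' y' h1 h2 hcon heq
    obtain ⟨c, hc⟩ := (Projectivization.mk_eq_mk_iff' F' _ _ h1 h2).mp heq
    exact hcon c (by simpa using congrFun hc 0) (by simpa using congrFun hc 1)
  have hee0 : ee ≠ 0 := fun h => he0 (hAinj (by rw [map_zero]; exact h))
  have hP10P01 : P10 ≠ P01 := by
    refine hne 1 0 0 1 hnz10 hnz01 fun c h0 h1 => ?_
    rw [mul_zero] at h0; exact zero_ne_one h0
  have hP11Pe1 : P11 ≠ Pe1 := by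
    refine hne 1 1 ee 1 hnz11 hnze1 fun c h0 h1 => ?_
    rw [mul_one] at h1
    rw [h1, one_mul] at h0
    exact hee1' (by rw [h0]; ring)
  have hPa1Pw1 : Pa1 ≠ Pw1 := by
    refine hne α 1 (α * algebraMap F F' w₂) 1 hnza1 hnzw1 fun c h0 h1 => ?_
    rw [mul_one] at h1
    rw [h1, one_mul] at h0
    apply hw₂1
    apply hAinj
    rw [map_one]
    exact mul_left_cancel₀ hα0 (by rw [h0, mul_one])
  have hP10P11 : P10 ≠ P11 := by
    refine hne 1 0 1 1 hnz10 hnz11 fun c h0 h1 => ?_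
    rw [mul_one] at h0 h1
    rw [h1] at h0; exact zero_ne_one h0
  have hP10Pe1 : P10 ≠ Pe1 := by
    refine hne 1 0 ee 1 hnz10 hnze1 fun c h0 h1 => ?_
    rw [mul_one] at h1
    rw [h1, zero_mul] at h0; exact zero_ne_one h0
  have hP01P11 : P01 ≠ P11 := by
    refine hne 0 1 1 1 hnz01 hnz11 fun c h0 h1 => ?_
    rw [mul_one] at h0 h1
    rw [h1] at h0; exact one_ne_zero h0
  have hP01Pe1 : P01 ≠ Pe1 := by
    refine hne 0 1 ee 1 hnz01 hnze1 fun c h0 h1 => ?_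
    rw [mul_one] at h1
    rw [h1, one_mul] at h0; exact hee0 h0
  have hP10Pa1 : P10 ≠ Pa1 := by
    refine hne 1 0 α 1 hnz10 hnza1 fun c h0 h1 => ?_
    rw [mul_one] at h1
    rw [h1, zero_mul] at h0; exact zero_ne_one h0
  have hP10Pw1 : P10 ≠ Pw1 := by
    refine hne 1 0 (α * algebraMap F F' w₂) 1 hnz10 hnzw1 fun c h0 h1 => ?_
    rw [mul_one] at h1
    rw [h1, zero_mul] at h0; exact zero_ne_one h0
  -- the intersections
  have hint12 : b₁ ∩ b₂ = {P10, P01} := by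
    refine Set.Subset.antisymm hsub12 ?_
    intro P hP
    simp only [Set.mem_insert_iff, Set.mem_singleton_iff] at hP
    rcases hP with rfl | rfl
    · exact ⟨hP10b₁, hP10b₂⟩
    · exact ⟨hP01b₁, hP01b₂⟩
  have hint13 : b₁ ∩ b₃ = {P11, Pe1} := by
    refine Set.Subset.antisymm hsub13 ?_
    intro P hP
    simp only [Set.mem_insert_iff, Set.mem_singleton_iff] at hP
    rcases hP with rfl | rfl
    · exact ⟨hP11b₁, hP11b₃⟩
    · exact ⟨hPe1b₁, hPe1b₃⟩
  have hint23 : b₂ ∩ b₃ = {Pa1, Pw1} := by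
    refine Set.Subset.antisymm hsub23 ?_
    intro P hP
    simp only [Set.mem_insert_iff, Set.mem_singleton_iff] at hP
    rcases hP with rfl | rfl
    · exact ⟨hPa1b₂, hPa1b₃⟩
    · exact ⟨hPw1b₂, hPw1b₃⟩
  refine ⟨b₁, b₂, b₃, ⟨g₁, hb₁⟩, ⟨g₂, hb₂⟩, ⟨g₃, hb₃⟩, ?_, ?_, ?_, ?_, ?_, ?_, ?_⟩
  · -- b₁ ≠ b₂
    intro h
    have hmem : P11 ∈ b₁ ∩ b₂ := ⟨hP11b₁, h ▸ hP11b₁⟩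
    rw [hint12] at hmem
    simp only [Set.mem_insert_iff, Set.mem_singleton_iff] at hmem
    rcases hmem with h' | h'
    · exact hP10P11 h'.symm
    · exact hP01P11 h'.symm
  · -- b₁ ≠ b₃
    intro h
    have hmem : P10 ∈ b₁ ∩ b₃ := ⟨hP10b₁, h ▸ hP10b₁⟩
    rw [hint13] at hmem
    simp only [Set.mem_insert_iff, Set.mem_singleton_iff] at hmem
    rcases hmem with h' | h'
    · exact hP10P11 h'
    · exact hP10Pe1 h'
  · -- b₂ ≠ b₃
    intro h
    have hmem : P10 ∈ b₂ ∩ b₃ := ⟨hP10b₂, h ▸ hP10b₂⟩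
    rw [hint23] at hmem
    simp only [Set.mem_insert_iff, Set.mem_singleton_iff] at hmem
    rcases hmem with h' | h'
    · exact hP10Pa1 h'
    · exact hP10Pw1 h'
  · rw [hint12]; exact Set.ncard_pair hP10P01
  · rw [hint13]; exact Set.ncard_pair hP11Pe1
  · rw [hint23]; exact Set.ncard_pair hPa1Pw1
  · -- empty triple intersection
    ext P
    simp only [Set.mem_inter_iff, Set.mem_empty_iff_false, iff_false]
    rintro ⟨⟨h1, h2⟩, h3⟩
    have h12 : P ∈ ({P10, P01} : Set _) := hint12 ▸ (⟨h1, h2⟩ : P ∈ b₁ ∩ b₂)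
    have h13 : P ∈ ({P11, Pe1} : Set _) := hint13 ▸ (⟨h1, h3⟩ : P ∈ b₁ ∩ b₃)
    simp only [Set.mem_insert_iff, Set.mem_singleton_iff] at h12 h13
    rcases h12 with rfl | rfl <;> rcases h13 with h' | h'
    · exact hP10P11 h'
    · exact hP10Pe1 h'
    · exact hP01P11 h'
    · exact hP01Pe1 h'

/-- if direction: for `m ≥ 2` even and `q ≥ 3`, there exist three
distinct `F_q`-sublines of `PG(1,q^m)` pairwise intersecting in exactly two points and
with no common point. -/
theorem stmt_14 (F F' : Type*) [Field F] [Fintype F] [Field F'] [Fintype F'] [Algebra F F']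
    (m : ℕ) (hm : 2 ≤ m) (hmeven : Even m) (hdeg : finrank F F' = m)
    (hq : 3 ≤ Fintype.card F) :
    ∃ b₁ b₂ b₃ : Set (Projectivization F' (Fin 2 → F')),
      IsSubline F F' b₁ ∧ IsSubline F F' b₂ ∧ IsSubline F F' b₃ ∧
      b₁ ≠ b₂ ∧ b₁ ≠ b₃ ∧ b₂ ≠ b₃ ∧
      (b₁ ∩ b₂).ncard = 2 ∧ (b₁ ∩ b₃).ncard = 2 ∧ (b₂ ∩ b₃).ncard = 2 ∧
      b₁ ∩ b₂ ∩ b₃ = ∅ := by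
  obtain ⟨α, s, t, e, hαA, hα2, hs0, he0, he1, hes⟩ := exists_alpha F F' m hm hmeven hdeg hq
  exact construction F F' α s t e hαA hα2 hs0 he0 he1 hes
end
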